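/- arXiv:2107.02956 — 3 statements merged into one kernel-verified Lean document; each statement's English description precedes it below -/
import Mathlib

section
/- Let 𝐀 and 𝐁 be graphs, i.e., σ-structures over a signature σ consisting of a single binary relation symbol E whose interpretations E(𝐀), E(𝐁) are symmetric and irreflexive. Then there exist doubly stochastic matrices X (rows indexed by B, columns by A) and Y (rows indexed by 𝒞_𝐁, columns by 𝒞_𝐀) such that X M_𝐀^ℓ = M_𝐁^ℓ Y and M_𝐀^ℓ Yᵀ = Xᵀ M_𝐁^ℓ for every label ℓ ∈ L, if and only if there exists a doubly stochastic matrix X' such that X' N_𝐀 = N_𝐁 X', where N_𝐀 and N_𝐁 denote the adjacency matrices of 𝐀 and 𝐁. -/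
attribute [local instance] Classical.propDecidable

set_option maxHeartbeats 1000000

noncomputable section

/-- A relational structure over the signature given by symbols `σ` with arities `ar`,
with universe `A`: for each relation symbol, a set of tuples. -/
structure Struct (σ : Type) (ar : σ → ℕ) (A : Type) : Type where
  rel : ∀ R : σ, Set (Fin (ar R) → A)

variable {σ : Type} {ar : σ → ℕ}

/-- The set of constraints of a structure: pairs `(R, 𝐚)` with `𝐚 ∈ R(AA)`. -/
def Cons {A : Type} (AA : Struct σ ar A) : Type :=
  Σ R : σ, {u : Fin (ar R) → A // u ∈ AA.rel R}

instance Cons.finite {A : Type} [Finite σ] [Finite A] {AA : Struct σ ar A} :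
    Finite (Cons AA) :=
  inferInstanceAs (Finite (Σ R : σ, {u : Fin (ar R) → A // u ∈ AA.rel R}))

noncomputable instance Cons.fintype {A : Type} [Fintype σ] [Fintype A] {AA : Struct σ ar A} :
    Fintype (Cons AA) := Fintype.ofFinite _

/-- Labels `(S, R)` with `R ∈ σ` and `S ⊆ [arity R]`. -/
abbrev Label (σ : Type) (ar : σ → ℕ) : Type := Σ R : σ, Finset (Fin (ar R))

/-- The entry of the matrix representation `M_AA` of a structure at `(a, R(𝐚))`:
the label `(S, R)` with `S = {i : 𝐚[i] = a}`. -/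
def lab {A : Type} (AA : Struct σ ar A) (a : A) (c : Cons AA) : Label σ ar :=
  ⟨c.1, Finset.univ.filter fun i => c.2.1 i = a⟩

/-- The 0/1 matrix `M_AA^ℓ`. -/
def labMat {A : Type} (AA : Struct σ ar A) (ℓ : Label σ ar) : Matrix A (Cons AA) ℝ :=
  fun a c => if lab AA a c = ℓ then 1 else 0

/-- A doubly stochastic matrix: non-negative entries, all rows and all columns sum to 1. -/
def IsDoublyStochastic {α β : Type} [Fintype α] [Fintype β] (X : Matrix α β ℝ) : Prop :=
  (∀ i j, 0 ≤ X i j) ∧ (∀ i, ∑ j, X i j = 1) ∧ (∀ j, ∑ i, X i j = 1)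

/-- A left stochastic matrix: non-negative entries, all columns sum to 1. -/
def IsLeftStochastic {α β : Type} [Fintype α] (X : Matrix α β ℝ) : Prop :=
  (∀ i j, 0 ≤ X i j) ∧ (∀ j, ∑ i, X i j = 1)

/-- Fractional isomorphism: doubly stochastic `X`, `Y` with
`X M_AA^ℓ = M_BB^ℓ Y` and `M_AA^ℓ Yᵀ = Xᵀ M_BB^ℓ` for every label `ℓ`. -/
def FracIso {A B : Type} [Fintype σ] [Fintype A] [Fintype B]
    (AA : Struct σ ar A) (BB : Struct σ ar B) : Prop :=
  ∃ (X : Matrix B A ℝ) (Y : Matrix (Cons BB) (Cons AA) ℝ),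
    IsDoublyStochastic X ∧ IsDoublyStochastic Y ∧
    ∀ ℓ : Label σ ar,
      X * labMat AA ℓ = labMat BB ℓ * Y ∧
      labMat AA ℓ * Y.transpose = X.transpose * labMat BB ℓ

/-- The type of iterated degrees of depth `k`. -/
def DegT (L : Type) : ℕ → Type
  | 0 => Bool
  | k + 1 => Multiset (L × DegT L k)

/-- The iterated degree `δ_k` of an element or a constraint of a structure. -/
def iterDeg {A : Type} [Fintype σ] [Fintype A] (AA : Struct σ ar A) :
    (k : ℕ) → A ⊕ Cons AA → DegT (Label σ ar) k
  | 0, x => x.isLeft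
  | k + 1, Sum.inl a =>
      (Finset.univ.val.map fun c : Cons AA => (lab AA a c, iterDeg AA k (Sum.inr c)) :
        Multiset (Label σ ar × DegT (Label σ ar) k))
  | k + 1, Sum.inr c =>
      (Finset.univ.val.map fun a : A => (lab AA a c, iterDeg AA k (Sum.inl a)) :
        Multiset (Label σ ar × DegT (Label σ ar) k))

/-- Two structures have the same iterated degree sequence. -/
def SameIterDeg {A B : Type} [Fintype σ] [Fintype A] [Fintype B]
    (AA : Struct σ ar A) (BB : Struct σ ar B) : Prop :=
  ∀ k : ℕ,
    Multiset.map (iterDeg AA k) (Finset.univ.val : Multiset (A ⊕ Cons AA)) =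
    Multiset.map (iterDeg BB k) (Finset.univ.val : Multiset (B ⊕ Cons BB))
/-- An equitable partition of a structure, given by index maps `p` (on the universe)
and `q` (on the constraints) together with its parameters `cpar`, `dpar`. -/
def IsEquitable {A : Type} (AA : Struct σ ar A) {I : Type u} {J : Type v}
    (p : A → I) (q : Cons AA → J)
    (cpar : Label σ ar → I → J → ℕ) (dpar : Label σ ar → J → I → ℕ) : Prop :=
  (∀ (a : A) (ℓ : Label σ ar) (j : J),
      Nat.card {c : Cons AA // q c = j ∧ lab AA a c = ℓ} = cpar ℓ (p a) j) ∧
  (∀ (c : Cons AA) (ℓ : Label σ ar) (i : I),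
      Nat.card {a : A // p a = i ∧ lab AA a c = ℓ} = dpar ℓ (q c) i)

/-- Two structures have a common equitable partition: equitable partitions with the same
index sets, the same parameters, and corresponding classes of equal sizes. -/
def CommonEquitable {A B : Type} (AA : Struct σ ar A) (BB : Struct σ ar B) : Prop :=
  ∃ (I J : Type) (pA : A → I) (qA : Cons AA → J) (pB : B → I) (qB : Cons BB → J)
    (cpar : Label σ ar → I → J → ℕ) (dpar : Label σ ar → J → I → ℕ),
    IsEquitable AA pA qA cpar dpar ∧ IsEquitable BB pB qB cpar dpar ∧
    (∀ i : I, Nat.card {a : A // pA a = i} = Nat.card {b : B // pB b = i}) ∧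
    (∀ j : J, Nat.card {c : Cons AA // qA c = j} = Nat.card {c : Cons BB // qB c = j})

/-- `h` is a homomorphism from `AA` to `BB`. -/
def IsHom {A B : Type} (AA : Struct σ ar A) (BB : Struct σ ar B) (h : A → B) : Prop :=
  ∀ (R : σ) (u : Fin (ar R) → A), u ∈ AA.rel R → (fun i => h (u i)) ∈ BB.rel R

/-- The number of homomorphisms from `AA` to `BB`. -/
def homCount {A B : Type} (AA : Struct σ ar A) (BB : Struct σ ar B) : ℕ :=
  Nat.card {h : A → B // IsHom AA BB h}

/-- The number of homomorphisms from `(TT, t)` to `(DD, d)` (with a designated element). -/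
def rhomCount {T D : Type} (TT : Struct σ ar T) (t : T) (DD : Struct σ ar D) (d : D) : ℕ :=
  Nat.card {h : T → D // IsHom TT DD h ∧ h t = d}

/-- The factor graph of a structure: bipartite graph on elements and constraints. -/
def factorGraph {A : Type} (AA : Struct σ ar A) : SimpleGraph (A ⊕ Cons AA) :=
  SimpleGraph.fromRel fun x y =>
    ∃ (a : A) (c : Cons AA), x = Sum.inl a ∧ y = Sum.inr c ∧ ∃ i, c.2.1 i = a

/-- A structure is an ftree if its factor graph is a tree. -/
def IsFtree {A : Type} (AA : Struct σ ar A) : Prop := (factorGraph AA).IsTree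
/-- The set `{𝐚}` of elements occurring in the tuple of a constraint, as a Finset. -/
def tsupp {A : Type} {AA : Struct σ ar A} (c : Cons AA) : Finset A :=
  Finset.univ.image c.2.1

lemma mem_tsupp {A : Type} {AA : Struct σ ar A} (c : Cons AA) (i : Fin (ar c.1)) :
    c.2.1 i ∈ tsupp c :=
  Finset.mem_image_of_mem _ (Finset.mem_univ i)

/-- Feasibility of the system `SA^k(AA, BB)`. -/
def SAfeasible {A B : Type} [Fintype B] (k : ℕ)
    (AA : Struct σ ar A) (BB : Struct σ ar B) : Prop :=
  ∃ (pV : (V : Finset A) → ({x // x ∈ V} → B) → ℝ)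
    (pC : (c : Cons AA) → ({x // x ∈ tsupp c} → B) → ℝ),
    -- all variables take values in [0,1]
    (∀ (V : Finset A) (f : {x // x ∈ V} → B),
        V.Nonempty → V.card ≤ k → 0 ≤ pV V f ∧ pV V f ≤ 1) ∧
    (∀ (c : Cons AA) (f : {x // x ∈ tsupp c} → B), 0 ≤ pC c f ∧ pC c f ≤ 1) ∧
    -- (SA1)
    (∀ V : Finset A, V.Nonempty → V.card ≤ k →
        ∑ f : {x // x ∈ V} → B, pV V f = 1) ∧
    -- (SA2)
    (∀ (U V : Finset A) (hUV : U ⊆ V), U.Nonempty → V.card ≤ k →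
        ∀ f : {x // x ∈ U} → B,
          pV U f = ∑ g : {x // x ∈ V} → B,
            if ∀ u : {x // x ∈ U}, g ⟨u.1, hUV u.2⟩ = f u then pV V g else 0) ∧
    -- (SA3)
    (∀ (c : Cons AA) (U : Finset A) (hU : U ⊆ tsupp c), U.Nonempty → U.card ≤ k →
        ∀ f : {x // x ∈ U} → B,
          pV U f = ∑ g : {x // x ∈ tsupp c} → B,
            if ∀ u : {x // x ∈ U}, g ⟨u.1, hU u.2⟩ = f u then pC c g else 0) ∧
    -- (SA4)
    (∀ (c : Cons AA) (f : {x // x ∈ tsupp c} → B),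
        (fun i => f ⟨c.2.1 i, mem_tsupp c i⟩) ∉ BB.rel c.1 → pC c f = 0)

/-- The relation symbols of the signature `σ*_k`. -/
inductive StarSym (σ : Type) (ar : σ → ℕ) (k : ℕ) : Type
  | TS (j : Fin k) (S : Finset (Fin (j.1 + 1)))
  | TI (j j' : Fin k) (iv : Fin (j'.1 + 1) → Fin (j.1 + 1))
  | RS (R : σ) (S : Finset (Fin (ar R)))
  | RI (R : σ) (j : Fin k) (iv : Fin (j.1 + 1) → Fin (ar R))

/-- Arities for `σ*_k`. -/
def starAr {k : ℕ} : StarSym σ ar k → ℕ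
  | .TS _ _ => 1
  | .TI _ _ _ => 2
  | .RS _ _ => 1
  | .RI _ _ _ => 2

/-- The universe of `AA*_k`: all tuples of length `1 ≤ j ≤ k` together with the constraints. -/
def StarUniv {A : Type} (AA : Struct σ ar A) (k : ℕ) : Type :=
  ((j : Fin k) × (Fin (j.1 + 1) → A)) ⊕ Cons AA

instance StarUniv.finite {A : Type} [Finite σ] [Finite A] {AA : Struct σ ar A} {k : ℕ} :
    Finite (StarUniv AA k) :=
  inferInstanceAs (Finite (((j : Fin k) × (Fin (j.1 + 1) → A)) ⊕ Cons AA))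

noncomputable instance StarUniv.fintype {A : Type} [Fintype σ] [Fintype A]
    {AA : Struct σ ar A} {k : ℕ} : Fintype (StarUniv AA k) := Fintype.ofFinite _

/-- The structure `AA*_k`. -/
def starStruct {A : Type} (AA : Struct σ ar A) (k : ℕ) :
    Struct (StarSym σ ar k) starAr (StarUniv AA k) where
  rel
    | .TS j S => {u | ∃ v : Fin (j.1 + 1) → A,
        (∀ i ∈ S, ∀ i' ∈ S, v i = v i') ∧ u = fun _ => Sum.inl ⟨j, v⟩}
    | .TI j j' iv => {u | ∃ v : Fin (j.1 + 1) → A,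
        u = ![Sum.inl ⟨j, v⟩, Sum.inl ⟨j', v ∘ iv⟩]}
    | .RS R S => {u | ∃ (v : Fin (ar R) → A) (hv : v ∈ AA.rel R),
        (∀ i ∈ S, ∀ i' ∈ S, v i = v i') ∧ u = fun _ => Sum.inr ⟨R, ⟨v, hv⟩⟩}
    | .RI R j iv => {u | ∃ (v : Fin (ar R) → A) (hv : v ∈ AA.rel R),
        u = ![Sum.inr ⟨R, ⟨v, hv⟩⟩, Sum.inl ⟨j, v ∘ iv⟩]}

/-- `AA ≡_k BB` : the structures `AA*_k` and `BB*_k` have a common equitable partition. -/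
def EquivK {A B : Type} (k : ℕ) (AA : Struct σ ar A) (BB : Struct σ ar B) : Prop :=
  CommonEquitable (starStruct AA k) (starStruct BB k)

/-- A bundled σ-structure with finite universe. -/
structure FinStruct (σ : Type) (ar : σ → ℕ) : Type 1 where
  carrier : Type
  [fin : Fintype carrier]
  str : Struct σ ar carrier

/-- One step in a chain: either a homomorphism exists, or the structures are
`≡_1`-equivalent (i.e. have a common equitable partition). -/
def FStep (X Y : FinStruct σ ar) : Prop :=
  (∃ h : X.carrier → Y.carrier, IsHom X.str Y.str h) ∨ CommonEquitable X.str Y.str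

/-- The structure `AA` has treewidth `< k`: there is a tree-decomposition all of whose
bags have at most `k` elements. -/
def HasTreewidthLT {A : Type} (AA : Struct σ ar A) (k : ℕ) : Prop :=
  ∃ (V : Type) (G : SimpleGraph V) (β : V → Finset A),
    G.IsTree ∧
    (∀ c : Cons AA, ∃ v : V, ∀ i, c.2.1 i ∈ β v) ∧
    (∀ (a : A) (u v : V), a ∈ β u → a ∈ β v →
      ∀ p : G.Walk u v, p.IsPath → ∀ w ∈ p.support, a ∈ β w) ∧
    (∀ v : V, (β v).card ≤ k)
/-- The adjacency matrix of a graph (a structure with one binary relation). -/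
def adjMat {A : Type} (AA : Struct Unit (fun _ => 2) A) : Matrix A A ℝ :=
  fun a a' => if ![a, a'] ∈ AA.rel () then 1 else 0

/-- A matrix is decomposable if, up to partitioning rows and columns into two
(nontrivial) blocks, it is a direct sum. -/
def MDecomposable {V W : Type} (M : Matrix V W ℝ) : Prop :=
  ∃ (SV : Set V) (SW : Set W),
    (SV.Nonempty ∨ SW.Nonempty) ∧ (SVᶜ.Nonempty ∨ SWᶜ.Nonempty) ∧
    ∀ v w, (v ∈ SV ∧ w ∉ SW) ∨ (v ∉ SV ∧ w ∈ SW) → M v w = 0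

/-- A bundled rooted ftree. -/
structure RootedFtree (σ : Type) (ar : σ → ℕ) : Type 1 where
  carrier : Type
  [fin : Fintype carrier]
  str : Struct σ ar carrier
  isFtree : IsFtree str
  root : carrier

/-- The profile of an element: the number of homomorphisms from each rooted ftree
mapping the root to it. -/
def degProfile {D : Type} (DD : Struct σ ar D) (d : D) : RootedFtree σ ar → ℕ :=
  fun F => rhomCount F.str F.root DD d

/-- The class of a constraint: its relation symbol, its equality pattern, and the
`degProfile`-classes of its coordinates. -/
def qProfile {D : Type} (DD : Struct σ ar D) (c : Cons DD) :
    Σ R : σ, Set (Fin (ar R) × Fin (ar R)) × (Fin (ar R) → (RootedFtree σ ar → ℕ)) :=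
  ⟨c.1, ({p | c.2.1 p.1 = c.2.1 p.2}, fun s => degProfile DD (c.2.1 s))⟩

/-- Number of homomorphisms with a designated element and a designated constraint. -/
def rhomCount2 {T D : Type} (TT : Struct σ ar T) (t : T) (c : Cons TT)
    (DD : Struct σ ar D) (d : D) (c' : Cons DD) : ℕ :=
  Nat.card {h : T → D // IsHom TT DD h ∧ h t = d ∧
    (⟨c.1, fun i => h (c.2.1 i)⟩ : Σ R : σ, Fin (ar R) → D) = ⟨c'.1, c'.2.1⟩}

/-- `(t, R(𝐭))` can be mapped to `(d, R'(𝐝))`. -/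
def CanMap {T D : Type} {TT : Struct σ ar T} {DD : Struct σ ar D}
    (t : T) (c : Cons TT) (d : D) (c' : Cons DD) : Prop :=
  ∃ hR : c.1 = c'.1,
    (∀ s s' : Fin (ar c.1), c.2.1 s = c.2.1 s' →
        c'.2.1 (Fin.cast (congrArg ar hR) s) = c'.2.1 (Fin.cast (congrArg ar hR) s')) ∧
    (∀ s : Fin (ar c.1), c.2.1 s = t → c'.2.1 (Fin.cast (congrArg ar hR) s) = d)

/-- A substructure of a structure: a subset of the universe together with a subset of
the tuples of each relation, lying inside the subset. -/
structure Substr {A : Type} (AA : Struct σ ar A) : Type where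
  carrier : Set A
  srel : ∀ R : σ, Set (Fin (ar R) → A)
  srel_sub : ∀ R : σ, srel R ⊆ AA.rel R
  srel_mem : ∀ R : σ, ∀ u ∈ srel R, ∀ i, u i ∈ carrier

/-- The substructure as a structure in its own right. -/
def Substr.toStruct {A : Type} {AA : Struct σ ar A} (Q : Substr AA) :
    Struct σ ar {x // x ∈ Q.carrier} where
  rel R := {u | (fun i => (u i).1) ∈ Q.srel R}

/-- Containment of substructures. -/
def Substr.le {A : Type} {AA : Struct σ ar A} (Q Q' : Substr AA) : Prop :=
  Q.carrier ⊆ Q'.carrier ∧ ∀ R : σ, Q.srel R ⊆ Q'.srel R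

/-- A subftree of `TT` avoiding the constraint `c`, containing a unique element of the
tuple of `c`, which moreover participates in exactly one constraint of the subftree. -/
def GoodPiece {T : Type} (TT : Struct σ ar T) (c : Cons TT) (Q : Substr TT) : Prop :=
  IsFtree Q.toStruct ∧
  c.2.1 ∉ Q.srel c.1 ∧
  ∃ x ∈ Q.carrier, (∃ i, c.2.1 i = x) ∧
    (∀ y ∈ Q.carrier, (∃ i, c.2.1 i = y) → y = x) ∧
    (∃! e : Σ R : σ, {u // u ∈ Q.srel R}, ∃ i, e.2.1 i = x)

/-- The collection `TT \ c` of maximal subftrees as above. -/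
def TreeMinus {T : Type} (TT : Struct σ ar T) (c : Cons TT) : Set (Substr TT) :=
  {Q | GoodPiece TT c Q ∧ ∀ Q' : Substr TT, GoodPiece TT c Q' → Q.le Q' → Q'.le Q}

/-- The disjoint union of two structures. -/
def dUnion {A B : Type} (AA : Struct σ ar A) (BB : Struct σ ar B) :
    Struct σ ar (A ⊕ B) where
  rel R := {u | (∃ v ∈ AA.rel R, u = fun i => Sum.inl (v i)) ∨
                (∃ v ∈ BB.rel R, u = fun i => Sum.inr (v i))}

/-- Embedding of constraints of `AA` into constraints of the disjoint union. -/
def consInl {A B : Type} (AA : Struct σ ar A) (BB : Struct σ ar B) (c : Cons AA) :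
    Cons (dUnion AA BB) :=
  ⟨c.1, ⟨fun i => Sum.inl (c.2.1 i), Or.inl ⟨c.2.1, c.2.2, rfl⟩⟩⟩

/-- Embedding of constraints of `BB` into constraints of the disjoint union. -/
def consInr {A B : Type} (AA : Struct σ ar A) (BB : Struct σ ar B) (c : Cons BB) :
    Cons (dUnion AA BB) :=
  ⟨c.1, ⟨fun i => Sum.inr (c.2.1 i), Or.inr ⟨c.2.1, c.2.2, rfl⟩⟩⟩

/-- The stable-degree class of an element of the disjoint union: its full iterated
degree sequence. -/
def degPclass {A B : Type} [Fintype σ] [Fintype A] [Fintype B]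
    (AA : Struct σ ar A) (BB : Struct σ ar B) (x : A ⊕ B) :
    (k : ℕ) → DegT (Label σ ar) k :=
  fun k => iterDeg (dUnion AA BB) k (Sum.inl x)

/-- The stable-degree class of a constraint of the disjoint union. -/
def degQclass {A B : Type} [Fintype σ] [Fintype A] [Fintype B]
    (AA : Struct σ ar A) (BB : Struct σ ar B) (c : Cons (dUnion AA BB)) :
    (k : ℕ) → DegT (Label σ ar) k :=
  fun k => iterDeg (dUnion AA BB) k (Sum.inr c)
/-- The set `Y`: tuples in `(B × [m])^m` with no repeated entries, in which the copy
index of each entry is bounded by the number of occurrences of its `B`-component. -/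
def Ytype (B : Type) (m : ℕ) : Type :=
  {y : Fin m → B × Fin m // Function.Injective y ∧
    ∀ i, ((y i).2 : ℕ) + 1 ≤ Nat.card {j : Fin m // (y j).1 = (y i).1}}

/-- Permuting the coordinates of an element of `Y`. -/
def permY {B : Type} {m : ℕ} (τ : Equiv.Perm (Fin m)) (y : Ytype B m) : Ytype B m :=
  ⟨fun i => y.1 (τ i), y.2.1.comp τ.injective, fun i => by
    have h := y.2.2 (τ i)
    have hc : Nat.card {j : Fin m // (y.1 (τ j)).1 = (y.1 (τ i)).1}
        = Nat.card {j : Fin m // (y.1 j).1 = (y.1 (τ i)).1} :=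
      Nat.card_congr (τ.subtypeEquiv fun j => Iff.rfl)
    exact le_trans h (le_of_eq hc.symm)⟩

/-- The structure `X₁` from the proof of Theorem `thm:SA1`, built from a choice
function `choice` selecting a canonical element of `Y` for each multiset. -/
def X1struct {A B : Type} (AA : Struct σ ar A) (BB : Struct σ ar B) (m : ℕ)
    (choice : (Fin m → B) → Ytype B m) : Struct σ ar (A × Ytype B m) where
  rel R := {u | ∃ a : Fin (ar R) → A, a ∈ AA.rel R ∧
    ∃ tt : Fin m → Fin (ar R) → B,
      (∀ i, tt i ∈ BB.rel R) ∧
      (∀ i s s', a s = a s' → tt i s = tt i s') ∧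
      ∃ τ : Equiv.Perm (Fin m),
        u = fun s => (a s, permY τ (choice fun i => tt i s))}

section AuxCR

lemma fin2_ext {α : Type*} {u v : Fin 2 → α} (h0 : u 0 = v 0) (h1 : u 1 = v 1) : u = v := by
  funext i
  fin_cases i <;> assumption

lemma eta2 {α : Type*} (u : Fin 2 → α) : ![u 0, u 1] = u :=
  (fin2_ext rfl rfl)

def Col : ℕ → Type
  | 0 => Unit
  | k+1 => Multiset (Col k)

def trunc : (k : ℕ) → Col (k+1) → Col k
  | 0, _ => ()
  | k+1, m => m.map (trunc k)

def col {V : Type} [Fintype V] (adj : V → V → Prop) : (k : ℕ) → V → Col k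
  | 0, _ => ()
  | k+1, v => (Finset.univ.filter (fun w => adj v w)).val.map (col adj k)

lemma trunc_col {V : Type} [Fintype V] (adj : V → V → Prop) :
    ∀ (k : ℕ) (v : V), trunc k (col adj (k+1) v) = col adj k v := by
  intro k
  induction k with
  | zero => intro v; rfl
  | succ k ih =>
    intro v
    show Multiset.map (trunc k) (Multiset.map (col adj (k+1)) _) = _
    rw [Multiset.map_map]
    show Multiset.map (fun w => trunc k (col adj (k+1) w)) _ = _
    simp only [ih]
    rfl

lemma count_col {V : Type} [Fintype V] (adj : V → V → Prop) (k : ℕ) (v : V) (w : Col k) :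
    Multiset.count w (col adj (k+1) v)
      = (Finset.univ.filter fun v' => adj v v' ∧ col adj k v' = w).card := by
  show Multiset.count w (Multiset.map (col adj k) _) = _
  rw [Multiset.count_map]
  rw [← Finset.filter_val, Finset.filter_filter]
  simp only [Finset.card_def, eq_comm]

lemma coupling_eq {A B : Type} [Fintype A] [Fintype B] (X : Matrix B A ℝ)
    (hpos : ∀ b a, 0 ≤ X b a) (hrow : ∀ b, ∑ a, X b a = 1) (hcol : ∀ a, ∑ b, X b a = 1)
    (u : A → ℝ) (w : B → ℝ)
    (h1 : ∀ b, ∑ a, X b a * u a = w b) (h2 : ∀ a, ∑ b, X b a * w b = u a) :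
    ∀ b a, X b a ≠ 0 → u a = w b := by
  have cross1 : ∑ b, ∑ a, X b a * u a * w b = ∑ b, w b * w b := by
    refine Finset.sum_congr rfl fun b _ => ?_
    rw [← Finset.sum_mul, h1]
  have cross2 : ∑ b, ∑ a, X b a * u a * w b = ∑ a, u a * u a := by
    rw [Finset.sum_comm]
    refine Finset.sum_congr rfl fun a _ => ?_
    have : ∀ b, X b a * u a * w b = X b a * w b * u a := fun b => by ring
    simp only [this]
    rw [← Finset.sum_mul, h2]
  have eA : ∑ b, ∑ a, X b a * (u a * u a) = ∑ a, u a * u a := by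
    rw [Finset.sum_comm]
    refine Finset.sum_congr rfl fun a _ => ?_
    rw [← Finset.sum_mul, hcol, one_mul]
  have eB : ∑ b, ∑ a, X b a * (w b * w b) = ∑ b, w b * w b := by
    refine Finset.sum_congr rfl fun b _ => ?_
    rw [← Finset.sum_mul, hrow, one_mul]
  have hS : ∑ b, ∑ a, X b a * (u a - w b)^2 = 0 := by
    have expand : ∀ b a, X b a * (u a - w b)^2
        = X b a * (u a * u a) + X b a * (w b * w b) - 2 * (X b a * u a * w b) := by
      intro b a; ring
    simp only [expand, Finset.sum_sub_distrib, Finset.sum_add_distrib, ← Finset.mul_sum]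
    linarith [cross1, cross2, eA, eB]
  intro b a hba
  have hz := (Finset.sum_eq_zero_iff_of_nonneg (fun b _ => Finset.sum_nonneg
    (fun a _ => mul_nonneg (hpos b a) (sq_nonneg _)))).1 hS b (Finset.mem_univ b)
  have hz2 := (Finset.sum_eq_zero_iff_of_nonneg (fun a _ => mul_nonneg (hpos b a) (sq_nonneg _))).1
    hz a (Finset.mem_univ a)
  have h0 : (u a - w b)^2 = 0 := by
    rcases mul_eq_zero.1 hz2 with h | h
    · exact absurd h hba
    · exact h
  have := pow_eq_zero_iff (n := 2) (by norm_num) |>.1 h0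
  linarith [this]

lemma ind_transfer {A B : Type} [Fintype A] [Fintype B] (X : Matrix B A ℝ) {C : Type}
    (f : A → C) (g : B → C)
    (hrow : ∀ b, ∑ a, X b a = 1) (hsupp : ∀ b a, X b a ≠ 0 → f a = g b) :
    ∀ (v : C) (b : B),
      ∑ a, X b a * (if f a = v then (1:ℝ) else 0) = if g b = v then 1 else 0 := by
  intro v b
  have : ∀ a, X b a * (if f a = v then (1:ℝ) else 0)
      = X b a * (if g b = v then 1 else 0) := by
    intro a
    by_cases h : X b a = 0
    · simp [h]
    · rw [hsupp b a h]
  simp only [this]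
  rw [← Finset.sum_mul, hrow, one_mul]

end AuxCR

-- AUX2 HERE

section AuxCR2
open Matrix

variable {A B : Type} [Fintype A] [Fintype B]

lemma card_filter_real {α : Type} [Fintype α] (p : α → Prop) [DecidablePred p] :
    ((Finset.univ.filter p).card : ℝ) = ∑ a, if p a then (1:ℝ) else 0 := by
  rw [Finset.card_filter]
  push_cast
  refine Finset.sum_congr rfl fun a _ => ?_
  by_cases h : p a <;> simp [h]

lemma support_col (adjA : A → A → Prop) (adjB : B → B → Prop)
    (X : Matrix B A ℝ)
    (hpos : ∀ b a, 0 ≤ X b a) (hrow : ∀ b, ∑ a, X b a = 1) (hcol : ∀ a, ∑ b, X b a = 1)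
    (hcomm : (Matrix.of fun b a => X b a) * (Matrix.of fun a a' => if adjA a a' then (1:ℝ) else 0)
        = (Matrix.of fun b b' => if adjB b b' then (1:ℝ) else 0) * (Matrix.of fun b a => X b a))
    (hsymA : ∀ a a', adjA a a' ↔ adjA a' a) (hsymB : ∀ b b', adjB b b' ↔ adjB b' b) :
    ∀ (k : ℕ) (b : B) (a : A), X b a ≠ 0 → col adjA k a = col adjB k b := by
  set NA : Matrix A A ℝ := Matrix.of fun a a' => if adjA a a' then (1:ℝ) else 0 with hNA
  set NB : Matrix B B ℝ := Matrix.of fun b b' => if adjB b b' then (1:ℝ) else 0 with hNB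
  set XM : Matrix B A ℝ := Matrix.of fun b a => X b a with hXM
  have hNAs : NAᵀ = NA := by
    ext a a'
    simp only [hNA, Matrix.transpose_apply, Matrix.of_apply]
    exact if_congr (hsymA a' a) rfl rfl
  have hNBs : NBᵀ = NB := by
    ext b b'
    simp only [hNB, Matrix.transpose_apply, Matrix.of_apply]
    exact if_congr (hsymB b' b) rfl rfl
  have hcommT : NA * XMᵀ = XMᵀ * NB := by
    have := congrArg Matrix.transpose hcomm
    rw [Matrix.transpose_mul, Matrix.transpose_mul, hNAs, hNBs] at this
    exact this
  intro k
  induction k with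
  | zero => intro b a _; rfl
  | succ k ih =>
    have e1 : ∀ (v : Col k), XM *ᵥ (fun a => if col adjA k a = v then (1:ℝ) else 0)
        = fun b => if col adjB k b = v then (1:ℝ) else 0 := by
      intro v
      funext b
      exact ind_transfer X (col adjA k) (col adjB k) hrow (fun b a h => ih b a h) v b
    have e2 : ∀ (v : Col k), XMᵀ *ᵥ (fun b => if col adjB k b = v then (1:ℝ) else 0)
        = fun a => if col adjA k a = v then (1:ℝ) else 0 := by
      intro v
      funext a
      exact ind_transfer (A := B) (B := A) (fun a b => X b a) (col adjB k) (col adjA k)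
        hcol (fun a b h => (ih b a h).symm) v a
    have key : ∀ (v : Col k) (b : B) (a : A), X b a ≠ 0 →
        (NA *ᵥ (fun a => if col adjA k a = v then (1:ℝ) else 0)) a
          = (NB *ᵥ (fun b => if col adjB k b = v then (1:ℝ) else 0)) b := by
      intro v
      refine coupling_eq X hpos hrow hcol _ _ ?_ ?_
      · intro b
        have : XM *ᵥ (NA *ᵥ (fun a => if col adjA k a = v then (1:ℝ) else 0))
            = NB *ᵥ (fun b => if col adjB k b = v then (1:ℝ) else 0) := by
          rw [Matrix.mulVec_mulVec, hcomm, ← Matrix.mulVec_mulVec, e1]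
        exact congrFun this b
      · intro a
        have : XMᵀ *ᵥ (NB *ᵥ (fun b => if col adjB k b = v then (1:ℝ) else 0))
            = NA *ᵥ (fun a => if col adjA k a = v then (1:ℝ) else 0) := by
          rw [Matrix.mulVec_mulVec, ← hcommT, ← Matrix.mulVec_mulVec, e2]
        exact congrFun this a
    intro b a hba
    have hcount : ∀ v : Col k,
        Multiset.count v (col adjA (k+1) a) = Multiset.count v (col adjB (k+1) b) := by
      intro v
      rw [count_col, count_col]
      have hu : ((Finset.univ.filter fun a' => adjA a a' ∧ col adjA k a' = v).card : ℝ)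
          = (NA *ᵥ (fun a => if col adjA k a = v then (1:ℝ) else 0)) a := by
        rw [card_filter_real]
        simp only [Matrix.mulVec, dotProduct, hNA, Matrix.of_apply]
        refine Finset.sum_congr rfl fun a' _ => ?_
        by_cases h1 : adjA a a' <;> by_cases h2 : col adjA k a' = v <;> simp [h1, h2]
      have hw : ((Finset.univ.filter fun b' => adjB b b' ∧ col adjB k b' = v).card : ℝ)
          = (NB *ᵥ (fun b => if col adjB k b = v then (1:ℝ) else 0)) b := by
        rw [card_filter_real]
        simp only [Matrix.mulVec, dotProduct, hNB, Matrix.of_apply]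
        refine Finset.sum_congr rfl fun b' _ => ?_
        by_cases h1 : adjB b b' <;> by_cases h2 : col adjB k b' = v <;> simp [h1, h2]
      have := key v b a hba
      have : ((Finset.univ.filter fun a' => adjA a a' ∧ col adjA k a' = v).card : ℝ)
          = ((Finset.univ.filter fun b' => adjB b b' ∧ col adjB k b' = v).card : ℝ) := by
        rw [hu, hw]; exact this
      exact_mod_cast this
    exact Multiset.ext.2 hcount

end AuxCR2
section AuxStab
open Matrix

variable {A B : Type} [Fintype A] [Fintype B]

lemma exists_stable (adjA : A → A → Prop) (adjB : B → B → Prop) :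
    ∃ K : ℕ, ∀ x y : A ⊕ B,
      Sum.elim (_root_.col adjA K) (_root_.col adjB K) x = Sum.elim (_root_.col adjA K) (_root_.col adjB K) y →
      Sum.elim (_root_.col adjA (K+1)) (_root_.col adjB (K+1)) x
        = Sum.elim (_root_.col adjA (K+1)) (_root_.col adjB (K+1)) y := by
  classical
  set c2 : (k : ℕ) → A ⊕ B → Col k :=
    fun k => Sum.elim (_root_.col adjA k) (_root_.col adjB k) with hc2
  have htr : ∀ (k : ℕ) (x : A ⊕ B), trunc k (c2 (k+1) x) = c2 k x := by
    intro k x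
    cases x with
    | inl a => exact trunc_col adjA k a
    | inr b => exact trunc_col adjB k b
  set N : ℕ → ℕ := fun k => (Finset.univ.image (c2 k)).card with hN
  have himg : ∀ k, (Finset.univ.image (c2 (k+1))).image (trunc k)
      = Finset.univ.image (c2 k) := by
    intro k
    rw [Finset.image_image]
    refine Finset.image_congr ?_
    intro x _
    exact htr k x
  have hmono : ∀ k, N k ≤ N (k+1) := by
    intro k
    rw [hN]
    simp only
    rw [← himg k]
    exact Finset.card_image_le
  have hbound : ∀ k, N k ≤ Fintype.card (A ⊕ B) := by
    intro k
    calc N k ≤ Finset.univ.card := Finset.card_image_le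
    _ = Fintype.card (A ⊕ B) := rfl
  have hK : ∃ K, N K = N (K+1) := by
    by_contra h
    push_neg at h
    have hsm : StrictMono N := strictMono_nat_of_lt_succ fun k => lt_of_le_of_ne (hmono k) (h k)
    have := hsm.le_apply (x := Fintype.card (A ⊕ B) + 1)
    have := hbound (Fintype.card (A ⊕ B) + 1)
    omega
  obtain ⟨K, hKeq⟩ := hK
  refine ⟨K, ?_⟩
  intro x y hxy
  have hinj : Set.InjOn (trunc K) (Finset.univ.image (c2 (K+1))) := by
    apply Finset.injOn_of_card_image_eq
    rw [himg K]
    have : N K = N (K+1) := hKeq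
    rw [hN] at this
    simp only at this
    omega
  have hx : c2 (K+1) x ∈ Finset.univ.image (c2 (K+1)) :=
    Finset.mem_image_of_mem _ (Finset.mem_univ x)
  have hy : c2 (K+1) y ∈ Finset.univ.image (c2 (K+1)) :=
    Finset.mem_image_of_mem _ (Finset.mem_univ y)
  exact hinj hx hy (by rw [htr K x, htr K y]; exact hxy)

end AuxStab
section AuxGraph
open Matrix

variable {A : Type} [Fintype A]

lemma sum_cons (AA : Struct Unit (fun _ => 2) A) (f : A → A → ℝ) :
    ∑ c : Cons AA, f (c.2.1 0) (c.2.1 1)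
      = ∑ a, ∑ a', if ![a,a'] ∈ AA.rel () then f a a' else 0 := by
  classical
  have hrhs : ∑ a, ∑ a', (if ![a,a'] ∈ AA.rel () then f a a' else 0)
      = ∑ p ∈ Finset.univ.filter (fun p : A × A => ![p.1,p.2] ∈ AA.rel ()), f p.1 p.2 := by
    rw [Finset.sum_filter, ← Finset.univ_product_univ, Finset.sum_product]
  rw [hrhs]
  refine Finset.sum_bij' (fun c _ => ((c.2.1 0, c.2.1 1) : A × A))
    (fun p hp => (⟨(), ⟨![p.1, p.2], (Finset.mem_filter.1 hp).2⟩⟩ : Cons AA))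
    ?_ ?_ ?_ ?_ ?_
  · intro c _
    rcases c with ⟨⟨⟩, u, hu⟩
    simp only [Finset.mem_filter, Finset.mem_univ, true_and]
    rw [eta2]
    exact hu
  · intro p hp
    exact Finset.mem_univ _
  · intro c _
    rcases c with ⟨⟨⟩, u, hu⟩
    simp only
    congr 1
    exact Subtype.ext (eta2 u)
  · intro p hp
    simp
  · intro c _
    rcases c with ⟨⟨⟩, u, hu⟩
    rfl

lemma lab_iff (AA : Struct Unit (fun _ => 2) A) (a : A) (c : Cons AA) (S : Finset (Fin 2)) :
    lab AA a c = ⟨(), S⟩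
      ↔ ((c.2.1 0 = a ↔ (0 : Fin 2) ∈ S) ∧ (c.2.1 1 = a ↔ (1 : Fin 2) ∈ S)) := by
  rcases c with ⟨⟨⟩, u, hu⟩
  show (⟨(), Finset.univ.filter fun i => u i = a⟩ : Label Unit (fun _ => 2)) = ⟨(), S⟩ ↔ _
  constructor
  · intro h
    simp only [Sigma.mk.inj_iff, heq_iff_eq, true_and] at h
    rw [Finset.ext_iff] at h
    have h0 := h 0
    have h1 := h 1
    simp only [Finset.mem_filter, Finset.mem_univ, true_and] at h0 h1
    exact ⟨h0, h1⟩
  · rintro ⟨h0, h1⟩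
    simp only [Sigma.mk.inj_iff, heq_iff_eq, true_and]
    ext i
    fin_cases i <;> simp only [Finset.mem_filter, Finset.mem_univ, true_and]
    · exact h0
    · exact h1

end AuxGraph
section AuxCount

variable {A : Type} [Fintype A] {C : Type}

/-- Real-valued degree of `a` into class `v`. -/
def DAf (AA : Struct Unit (fun _ => 2) A) (cA : A → C) (v : C) (a : A) : ℝ :=
  ∑ x, if ![a,x] ∈ AA.rel () ∧ cA x = v then 1 else 0

/-- Real-valued size of class `v`. -/
def nAf (cA : A → C) (v : C) : ℝ :=
  ∑ a, if cA a = v then 1 else 0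

/-- Real-valued number of constraints in class `(v, w)`. -/
def mAf (AA : Struct Unit (fun _ => 2) A) (cA : A → C) (v w : C) : ℝ :=
  ∑ c : Cons AA, if cA (c.2.1 0) = v ∧ cA (c.2.1 1) = w then 1 else 0

lemma DAf_nonneg (AA : Struct Unit (fun _ => 2) A) (cA : A → C) (v : C) (a : A) :
    0 ≤ DAf AA cA v a :=
  Finset.sum_nonneg fun x _ => by by_cases h : ![a,x] ∈ AA.rel () ∧ cA x = v <;> simp [h]

lemma nAf_nonneg (cA : A → C) (v : C) : 0 ≤ nAf cA v :=
  Finset.sum_nonneg fun x _ => by by_cases h : cA x = v <;> simp [h]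

lemma mAf_nonneg (AA : Struct Unit (fun _ => 2) A) (cA : A → C) (v w : C) :
    0 ≤ mAf AA cA v w :=
  Finset.sum_nonneg fun c _ =>
    by by_cases h : cA (c.2.1 0) = v ∧ cA (c.2.1 1) = w <;> simp [h]

lemma nAf_pos (cA : A → C) (a : A) : 1 ≤ nAf cA (cA a) := by
  have : ∀ x ∈ Finset.univ, (0:ℝ) ≤ if cA x = cA a then 1 else 0 := fun x _ => by
    by_cases h : cA x = cA a <;> simp [h]
  have h := Finset.single_le_sum this (Finset.mem_univ a)
  unfold nAf
  exact le_trans (le_of_eq (if_pos rfl).symm) h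

lemma DAf_pos (AA : Struct Unit (fun _ => 2) A) (cA : A → C) {a x : A}
    (h : ![a,x] ∈ AA.rel ()) : 1 ≤ DAf AA cA (cA x) a := by
  have hterm : ∀ y ∈ Finset.univ,
      (0:ℝ) ≤ if ![a,y] ∈ AA.rel () ∧ cA y = cA x then 1 else 0 := fun y _ => by
    by_cases hy : ![a,y] ∈ AA.rel () ∧ cA y = cA x <;> simp [hy]
  have h' := Finset.single_le_sum hterm (Finset.mem_univ x)
  unfold DAf
  exact le_trans (le_of_eq (if_pos ⟨h, rfl⟩).symm) h'

lemma mAf_pos (AA : Struct Unit (fun _ => 2) A) (cA : A → C) (c : Cons AA) :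
    1 ≤ mAf AA cA (cA (c.2.1 0)) (cA (c.2.1 1)) := by
  have hterm : ∀ c' ∈ (Finset.univ : Finset (Cons AA)),
      (0:ℝ) ≤ if cA (c'.2.1 0) = cA (c.2.1 0) ∧ cA (c'.2.1 1) = cA (c.2.1 1)
        then 1 else 0 := fun c' _ => by
    by_cases hy : cA (c'.2.1 0) = cA (c.2.1 0) ∧ cA (c'.2.1 1) = cA (c.2.1 1) <;> simp [hy]
  have h' := Finset.single_le_sum hterm (Finset.mem_univ c)
  unfold mAf
  exact le_trans (le_of_eq (if_pos ⟨rfl, rfl⟩).symm) h'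

lemma fiber0 (AA : Struct Unit (fun _ => 2) A) (cA : A → C) (a : A) (w : C) :
    ∑ c : Cons AA, (if c.2.1 0 = a ∧ cA (c.2.1 1) = w then (1:ℝ) else 0)
      = DAf AA cA w a := by
  rw [sum_cons AA (fun x x' => if x = a ∧ cA x' = w then (1:ℝ) else 0)]
  rw [Finset.sum_eq_single a]
  · unfold DAf
    refine Finset.sum_congr rfl fun x _ => ?_
    by_cases h1 : ![a,x] ∈ AA.rel () <;> by_cases h2 : cA x = w <;> simp [h1, h2]
  · intro x _ hx
    refine Finset.sum_eq_zero fun x' _ => ?_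
    simp [hx]
  · intro h
    exact absurd (Finset.mem_univ a) h

lemma fiber1 (AA : Struct Unit (fun _ => 2) A) (cA : A → C)
    (hAsymm : ∀ u ∈ AA.rel (), (![u 1, u 0] : Fin 2 → A) ∈ AA.rel ())
    (a : A) (w : C) :
    ∑ c : Cons AA, (if c.2.1 1 = a ∧ cA (c.2.1 0) = w then (1:ℝ) else 0)
      = DAf AA cA w a := by
  have hsym : ∀ x y : A, ![x,y] ∈ AA.rel () ↔ ![y,x] ∈ AA.rel () := by
    intro x y
    constructor <;> intro h <;> · have := hAsymm _ h; simpa using this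
  rw [sum_cons AA (fun x x' => if x' = a ∧ cA x = w then (1:ℝ) else 0)]
  rw [Finset.sum_comm]
  rw [Finset.sum_eq_single a]
  · unfold DAf
    refine Finset.sum_congr rfl fun x _ => ?_
    rw [propext (hsym x a)]
    by_cases h1 : ![a,x] ∈ AA.rel () <;> by_cases h2 : cA x = w <;> simp [h1, h2]
  · intro x _ hx
    refine Finset.sum_eq_zero fun x' _ => ?_
    simp [hx]
  · intro h
    exact absurd (Finset.mem_univ a) h

lemma mAf_eq (AA : Struct Unit (fun _ => 2) A) (cA : A → C)
    (H2R : ∀ a a', cA a = cA a' → ∀ v, DAf AA cA v a = DAf AA cA v a')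
    (w : C) (a : A) :
    mAf AA cA (cA a) w = nAf cA (cA a) * DAf AA cA w a := by
  unfold mAf
  rw [sum_cons AA (fun x x' => if cA x = cA a ∧ cA x' = w then (1:ℝ) else 0)]
  have step : ∀ x : A, ∑ x', (if ![x,x'] ∈ AA.rel () then
        (if cA x = cA a ∧ cA x' = w then (1:ℝ) else 0) else 0)
      = (if cA x = cA a then (1:ℝ) else 0) * DAf AA cA w a := by
    intro x
    by_cases hx : cA x = cA a
    · rw [if_pos hx, one_mul, ← H2R x a hx w]
      unfold DAf
      refine Finset.sum_congr rfl fun x' _ => ?_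
      by_cases h1 : ![x,x'] ∈ AA.rel () <;> by_cases h2 : cA x' = w <;> simp [h1, h2, hx]
    · rw [if_neg hx, zero_mul]
      refine Finset.sum_eq_zero fun x' _ => ?_
      simp [hx]
  simp only [step]
  rw [← Finset.sum_mul]
  rfl

lemma mAf_eq' (AA : Struct Unit (fun _ => 2) A) (cA : A → C)
    (hAsymm : ∀ u ∈ AA.rel (), (![u 1, u 0] : Fin 2 → A) ∈ AA.rel ())
    (H2R : ∀ a a', cA a = cA a' → ∀ v, DAf AA cA v a = DAf AA cA v a')
    (v : C) (a : A) :
    mAf AA cA v (cA a) = nAf cA (cA a) * DAf AA cA v a := by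
  have hsym : ∀ x y : A, ![x,y] ∈ AA.rel () ↔ ![y,x] ∈ AA.rel () := by
    intro x y
    constructor <;> intro h <;> · have := hAsymm _ h; simpa using this
  unfold mAf
  rw [sum_cons AA (fun x x' => if cA x = v ∧ cA x' = cA a then (1:ℝ) else 0)]
  rw [Finset.sum_comm]
  have step : ∀ x' : A, ∑ x, (if ![x,x'] ∈ AA.rel () then
        (if cA x = v ∧ cA x' = cA a then (1:ℝ) else 0) else 0)
      = (if cA x' = cA a then (1:ℝ) else 0) * DAf AA cA v a := by
    intro x'
    by_cases hx : cA x' = cA a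
    · rw [if_pos hx, one_mul, ← H2R x' a hx v]
      unfold DAf
      refine Finset.sum_congr rfl fun x _ => ?_
      rw [propext (hsym x x')]
      by_cases h1 : ![x',x] ∈ AA.rel () <;> by_cases h2 : cA x = v <;> simp [h1, h2, hx]
    · rw [if_neg hx, zero_mul]
      refine Finset.sum_eq_zero fun x _ => ?_
      simp [hx]
  simp only [step]
  rw [← Finset.sum_mul]
  rfl

end AuxCount
section AuxConstruct

variable {A B : Type} [Fintype A] [Fintype B] {C : Type}

/-- The block-uniform doubly stochastic matrix on elements. -/
def X0f (cA : A → C) (cB : B → C) : Matrix B A ℝ :=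
  fun b a => if cB b = cA a then (nAf cA (cA a))⁻¹ else 0

/-- The block-uniform doubly stochastic matrix on constraints. -/
def Y0f (AA : Struct Unit (fun _ => 2) A) (BB : Struct Unit (fun _ => 2) B)
    (cA : A → C) (cB : B → C) : Matrix (Cons BB) (Cons AA) ℝ :=
  fun c' c => if cB (c'.2.1 0) = cA (c.2.1 0) ∧ cB (c'.2.1 1) = cA (c.2.1 1)
    then (mAf AA cA (cA (c.2.1 0)) (cA (c.2.1 1)))⁻¹ else 0

lemma cons_rel (AA : Struct Unit (fun _ => 2) A) (c : Cons AA) :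
    ![c.2.1 0, c.2.1 1] ∈ AA.rel () := by
  rw [eta2]
  exact c.2.2

lemma hm_eq (AA : Struct Unit (fun _ => 2) A) (BB : Struct Unit (fun _ => 2) B)
    (cA : A → C) (cB : B → C)
    (H1R : ∀ v, nAf cA v = nAf cB v)
    (H2R : ∀ a a', cA a = cA a' → ∀ v, DAf AA cA v a = DAf AA cA v a')
    (H3R : ∀ b b', cB b = cB b' → ∀ v, DAf BB cB v b = DAf BB cB v b')
    (H4R : ∀ a b, cA a = cB b → ∀ v, DAf AA cA v a = DAf BB cB v b) :
    ∀ v w, mAf AA cA v w = mAf BB cB v w := by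
  intro v w
  by_cases hA : ∃ a, cA a = v
  · obtain ⟨a, ha⟩ := hA
    have hB : ∃ b, cB b = v := by
      by_contra hB
      push_neg at hB
      have hz : nAf cB v = 0 := Finset.sum_eq_zero fun b _ => by simp [hB b]
      have h1 := nAf_pos cA a
      rw [ha, H1R v, hz] at h1
      linarith
    obtain ⟨b, hb⟩ := hB
    calc mAf AA cA v w = nAf cA v * DAf AA cA w a := by
          rw [← ha]; exact mAf_eq AA cA H2R w a
    _ = nAf cB v * DAf BB cB w b := by rw [H1R, H4R a b (ha.trans hb.symm) w]
    _ = mAf BB cB v w := by rw [← hb]; exact (mAf_eq BB cB H3R w b).symm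
  · push_neg at hA
    have hAz : mAf AA cA v w = 0 := Finset.sum_eq_zero fun c _ => by simp [hA (c.2.1 0)]
    have hBnone : ∀ b, cB b ≠ v := by
      intro b hbv
      have h1 := nAf_pos cB b
      rw [hbv, ← H1R v] at h1
      have hz : nAf cA v = 0 := Finset.sum_eq_zero fun a _ => by simp [hA a]
      rw [hz] at h1
      linarith
    have hBz : mAf BB cB v w = 0 := Finset.sum_eq_zero fun c _ => by simp [hBnone (c.2.1 0)]
    rw [hAz, hBz]

end AuxConstruct

section AuxMore
variable {A B : Type} [Fintype A] [Fintype B]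

lemma cons_ne (AA : Struct Unit (fun _ => 2) A)
    (hAirr : ∀ u ∈ AA.rel (), u 0 ≠ u 1) (c : Cons AA) : c.2.1 0 ≠ c.2.1 1 := by
  have := hAirr _ (cons_rel AA c)
  simpa using this

lemma lab_iff' (AA : Struct Unit (fun _ => 2) A) (a : A) (c : Cons AA)
    (ℓ : Label Unit (fun _ => 2)) :
    lab AA a c = ℓ
      ↔ ((c.2.1 0 = a ↔ (0 : Fin 2) ∈ ℓ.2) ∧ (c.2.1 1 = a ↔ (1 : Fin 2) ∈ ℓ.2)) := by
  obtain ⟨⟨⟩, S⟩ := ℓ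
  exact lab_iff AA a c S

end AuxMore
section AuxEF

variable {A B : Type} [Fintype A] [Fintype B] {C : Type}

lemma E0lem (AA : Struct Unit (fun _ => 2) A) (BB : Struct Unit (fun _ => 2) B)
    (cA : A → C) (cB : B → C)
    (H2R : ∀ a a', cA a = cA a' → ∀ v, DAf AA cA v a = DAf AA cA v a')
    (H4R : ∀ a b, cA a = cB b → ∀ v, DAf AA cA v a = DAf BB cB v b)
    (b : B) (c : Cons AA) :
    ∑ c', (if c'.2.1 0 = b then (1:ℝ) else 0) * Y0f AA BB cA cB c' c
      = X0f cA cB b (c.2.1 0) := by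
  have key : ∀ c' : Cons BB, (if c'.2.1 0 = b then (1:ℝ) else 0) * Y0f AA BB cA cB c' c
      = (if c'.2.1 0 = b ∧ cB (c'.2.1 1) = cA (c.2.1 1) then (1:ℝ) else 0)
        * (if cB b = cA (c.2.1 0)
            then (mAf AA cA (cA (c.2.1 0)) (cA (c.2.1 1)))⁻¹ else 0) := by
    intro c'
    unfold Y0f
    by_cases e1 : c'.2.1 0 = b
    · rw [e1]
      by_cases e2 : cB (c'.2.1 1) = cA (c.2.1 1) <;>
        by_cases e3 : cB b = cA (c.2.1 0) <;> simp [e2, e3]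
    · simp [e1]
  simp only [key]
  rw [← Finset.sum_mul, fiber0 BB cB b (cA (c.2.1 1))]
  unfold X0f
  by_cases h : cB b = cA (c.2.1 0)
  · rw [if_pos h, if_pos h]
    rw [← H4R (c.2.1 0) b h.symm (cA (c.2.1 1))]
    rw [mAf_eq AA cA H2R (cA (c.2.1 1)) (c.2.1 0)]
    have hd1 : (1:ℝ) ≤ DAf AA cA (cA (c.2.1 1)) (c.2.1 0) := DAf_pos AA cA (cons_rel AA c)
    have hn1 : (1:ℝ) ≤ nAf cA (cA (c.2.1 0)) := nAf_pos cA _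
    rw [mul_inv_rev, ← mul_assoc, mul_inv_cancel₀ (by linarith), one_mul]
  · rw [if_neg h, if_neg h, mul_zero]

lemma E1lem (AA : Struct Unit (fun _ => 2) A) (BB : Struct Unit (fun _ => 2) B)
    (hAsymm : ∀ u ∈ AA.rel (), (![u 1, u 0] : Fin 2 → A) ∈ AA.rel ())
    (hBsymm : ∀ u ∈ BB.rel (), (![u 1, u 0] : Fin 2 → B) ∈ BB.rel ())
    (cA : A → C) (cB : B → C)
    (H2R : ∀ a a', cA a = cA a' → ∀ v, DAf AA cA v a = DAf AA cA v a')
    (H4R : ∀ a b, cA a = cB b → ∀ v, DAf AA cA v a = DAf BB cB v b)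
    (b : B) (c : Cons AA) :
    ∑ c', (if c'.2.1 1 = b then (1:ℝ) else 0) * Y0f AA BB cA cB c' c
      = X0f cA cB b (c.2.1 1) := by
  have key : ∀ c' : Cons BB, (if c'.2.1 1 = b then (1:ℝ) else 0) * Y0f AA BB cA cB c' c
      = (if c'.2.1 1 = b ∧ cB (c'.2.1 0) = cA (c.2.1 0) then (1:ℝ) else 0)
        * (if cB b = cA (c.2.1 1)
            then (mAf AA cA (cA (c.2.1 0)) (cA (c.2.1 1)))⁻¹ else 0) := by
    intro c'
    unfold Y0f
    by_cases e1 : c'.2.1 1 = b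
    · rw [e1]
      by_cases e2 : cB (c'.2.1 0) = cA (c.2.1 0) <;>
        by_cases e3 : cB b = cA (c.2.1 1) <;> simp [e2, e3]
    · simp [e1]
  simp only [key]
  rw [← Finset.sum_mul, fiber1 BB cB hBsymm b (cA (c.2.1 0))]
  unfold X0f
  by_cases h : cB b = cA (c.2.1 1)
  · rw [if_pos h, if_pos h]
    rw [← H4R (c.2.1 1) b h.symm (cA (c.2.1 0))]
    rw [mAf_eq' AA cA hAsymm H2R (cA (c.2.1 0)) (c.2.1 1)]
    have hd1 : (1:ℝ) ≤ DAf AA cA (cA (c.2.1 0)) (c.2.1 1) := by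
      have hr : ![c.2.1 1, c.2.1 0] ∈ AA.rel () := by
        have := hAsymm _ (cons_rel AA c)
        simpa using this
      exact DAf_pos AA cA hr
    have hn1 : (1:ℝ) ≤ nAf cA (cA (c.2.1 1)) := nAf_pos cA _
    rw [mul_inv_rev, ← mul_assoc, mul_inv_cancel₀ (by linarith), one_mul]
  · rw [if_neg h, if_neg h, mul_zero]

lemma F0lem (AA : Struct Unit (fun _ => 2) A) (BB : Struct Unit (fun _ => 2) B)
    (cA : A → C) (cB : B → C)
    (H2R : ∀ a a', cA a = cA a' → ∀ v, DAf AA cA v a = DAf AA cA v a')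
    (H4R : ∀ a b, cA a = cB b → ∀ v, DAf AA cA v a = DAf BB cB v b)
    (a : A) (c' : Cons BB) :
    ∑ c, (if c.2.1 0 = a then (1:ℝ) else 0) * Y0f AA BB cA cB c' c
      = X0f cA cB (c'.2.1 0) a := by
  have key : ∀ c : Cons AA, (if c.2.1 0 = a then (1:ℝ) else 0) * Y0f AA BB cA cB c' c
      = (if c.2.1 0 = a ∧ cA (c.2.1 1) = cB (c'.2.1 1) then (1:ℝ) else 0)
        * (if cB (c'.2.1 0) = cA a
            then (mAf AA cA (cA a) (cB (c'.2.1 1)))⁻¹ else 0) := by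
    intro c
    unfold Y0f
    by_cases e1 : c.2.1 0 = a
    · rw [e1]
      by_cases e2 : cA (c.2.1 1) = cB (c'.2.1 1)
      · rw [e2]
        by_cases e3 : cB (c'.2.1 0) = cA a <;> simp [e2, e3]
      · by_cases e3 : cB (c'.2.1 0) = cA a <;>
          simp [e2, e3, show ¬ cB (c'.2.1 1) = cA (c.2.1 1) from fun h => e2 h.symm]
    · simp [e1]
  simp only [key]
  rw [← Finset.sum_mul, fiber0 AA cA a (cB (c'.2.1 1))]
  unfold X0f
  by_cases h : cB (c'.2.1 0) = cA a
  · rw [if_pos h, if_pos h]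
    rw [mAf_eq AA cA H2R (cB (c'.2.1 1)) a]
    have hd1 : (1:ℝ) ≤ DAf AA cA (cB (c'.2.1 1)) a := by
      rw [H4R a (c'.2.1 0) h.symm (cB (c'.2.1 1))]
      exact DAf_pos BB cB (cons_rel BB c')
    have hn1 : (1:ℝ) ≤ nAf cA (cA a) := nAf_pos cA _
    rw [mul_inv_rev, ← mul_assoc, mul_inv_cancel₀ (by linarith), one_mul]
  · rw [if_neg h, if_neg h, mul_zero]

lemma F1lem (AA : Struct Unit (fun _ => 2) A) (BB : Struct Unit (fun _ => 2) B)
    (hAsymm : ∀ u ∈ AA.rel (), (![u 1, u 0] : Fin 2 → A) ∈ AA.rel ())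
    (hBsymm : ∀ u ∈ BB.rel (), (![u 1, u 0] : Fin 2 → B) ∈ BB.rel ())
    (cA : A → C) (cB : B → C)
    (H2R : ∀ a a', cA a = cA a' → ∀ v, DAf AA cA v a = DAf AA cA v a')
    (H4R : ∀ a b, cA a = cB b → ∀ v, DAf AA cA v a = DAf BB cB v b)
    (a : A) (c' : Cons BB) :
    ∑ c, (if c.2.1 1 = a then (1:ℝ) else 0) * Y0f AA BB cA cB c' c
      = X0f cA cB (c'.2.1 1) a := by
  have key : ∀ c : Cons AA, (if c.2.1 1 = a then (1:ℝ) else 0) * Y0f AA BB cA cB c' c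
      = (if c.2.1 1 = a ∧ cA (c.2.1 0) = cB (c'.2.1 0) then (1:ℝ) else 0)
        * (if cB (c'.2.1 1) = cA a
            then (mAf AA cA (cB (c'.2.1 0)) (cA a))⁻¹ else 0) := by
    intro c
    unfold Y0f
    by_cases e1 : c.2.1 1 = a
    · rw [e1]
      by_cases e2 : cA (c.2.1 0) = cB (c'.2.1 0)
      · rw [e2]
        by_cases e3 : cB (c'.2.1 1) = cA a <;> simp [e2, e3]
      · by_cases e3 : cB (c'.2.1 1) = cA a <;>
          simp [e2, e3, show ¬ cB (c'.2.1 0) = cA (c.2.1 0) from fun h => e2 h.symm]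
    · simp [e1]
  simp only [key]
  rw [← Finset.sum_mul, fiber1 AA cA hAsymm a (cB (c'.2.1 0))]
  unfold X0f
  by_cases h : cB (c'.2.1 1) = cA a
  · rw [if_pos h, if_pos h]
    rw [mAf_eq' AA cA hAsymm H2R (cB (c'.2.1 0)) a]
    have hd1 : (1:ℝ) ≤ DAf AA cA (cB (c'.2.1 0)) a := by
      rw [H4R a (c'.2.1 1) h.symm (cB (c'.2.1 0))]
      have hr : ![c'.2.1 1, c'.2.1 0] ∈ BB.rel () := by
        have := hBsymm _ (cons_rel BB c')
        simpa using this
      exact DAf_pos BB cB hr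
    have hn1 : (1:ℝ) ≤ nAf cA (cA a) := nAf_pos cA _
    rw [mul_inv_rev, ← mul_assoc, mul_inv_cancel₀ (by linarith), one_mul]
  · rw [if_neg h, if_neg h, mul_zero]

end AuxEF
section AuxDS

variable {A B : Type} [Fintype A] [Fintype B] {C : Type}

lemma X0f_DS (cA : A → C) (cB : B → C)
    (H1R : ∀ v, nAf cA v = nAf cB v) :
    IsDoublyStochastic (X0f cA cB) := by
  refine ⟨?_, ?_, ?_⟩
  · intro b a
    unfold X0f
    by_cases h : cB b = cA a
    · rw [if_pos h]
      exact inv_nonneg.2 (nAf_nonneg cA _)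
    · rw [if_neg h]
  · intro b
    have key : ∀ a, X0f cA cB b a
        = (if cA a = cB b then (1:ℝ) else 0) * (nAf cA (cB b))⁻¹ := by
      intro a
      unfold X0f
      by_cases h : cB b = cA a
      · rw [if_pos h, if_pos h.symm, one_mul, h]
      · rw [if_neg h, if_neg (fun hh => h hh.symm), zero_mul]
    simp only [key]
    rw [← Finset.sum_mul]
    have hn : (∑ a, if cA a = cB b then (1:ℝ) else 0) = nAf cA (cB b) := rfl
    rw [hn]
    apply mul_inv_cancel₀
    have h1 : (1:ℝ) ≤ nAf cB (cB b) := nAf_pos cB b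
    rw [H1R (cB b)]
    linarith
  · intro a
    have key : ∀ b, X0f cA cB b a
        = (if cB b = cA a then (1:ℝ) else 0) * (nAf cA (cA a))⁻¹ := by
      intro b
      unfold X0f
      by_cases h : cB b = cA a
      · rw [if_pos h, if_pos h, one_mul]
      · rw [if_neg h, if_neg h, zero_mul]
    simp only [key]
    rw [← Finset.sum_mul]
    have hn : (∑ b, if cB b = cA a then (1:ℝ) else 0) = nAf cB (cA a) := rfl
    rw [hn, ← H1R (cA a)]
    apply mul_inv_cancel₀
    have h1 : (1:ℝ) ≤ nAf cA (cA a) := nAf_pos cA a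
    linarith

lemma Y0f_DS (AA : Struct Unit (fun _ => 2) A) (BB : Struct Unit (fun _ => 2) B)
    (cA : A → C) (cB : B → C)
    (hm : ∀ v w, mAf AA cA v w = mAf BB cB v w) :
    IsDoublyStochastic (Y0f AA BB cA cB) := by
  refine ⟨?_, ?_, ?_⟩
  · intro c' c
    unfold Y0f
    by_cases h : cB (c'.2.1 0) = cA (c.2.1 0) ∧ cB (c'.2.1 1) = cA (c.2.1 1)
    · rw [if_pos h]
      exact inv_nonneg.2 (mAf_nonneg AA cA _ _)
    · rw [if_neg h]
  · intro c'
    have key : ∀ c : Cons AA, Y0f AA BB cA cB c' c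
        = (if cA (c.2.1 0) = cB (c'.2.1 0) ∧ cA (c.2.1 1) = cB (c'.2.1 1)
            then (1:ℝ) else 0)
          * (mAf AA cA (cB (c'.2.1 0)) (cB (c'.2.1 1)))⁻¹ := by
      intro c
      unfold Y0f
      by_cases h1 : cB (c'.2.1 0) = cA (c.2.1 0)
      · by_cases h2 : cB (c'.2.1 1) = cA (c.2.1 1)
        · rw [if_pos ⟨h1, h2⟩, if_pos ⟨h1.symm, h2.symm⟩, one_mul, h1, h2]
        · rw [if_neg (fun hh => h2 hh.2), if_neg (fun hh => h2 hh.2.symm), zero_mul]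
      · rw [if_neg (fun hh => h1 hh.1), if_neg (fun hh => h1 hh.1.symm), zero_mul]
    simp only [key]
    rw [← Finset.sum_mul]
    have hn : (∑ c : Cons AA, if cA (c.2.1 0) = cB (c'.2.1 0) ∧ cA (c.2.1 1) = cB (c'.2.1 1)
        then (1:ℝ) else 0) = mAf AA cA (cB (c'.2.1 0)) (cB (c'.2.1 1)) := rfl
    rw [hn]
    apply mul_inv_cancel₀
    have h1 : (1:ℝ) ≤ mAf BB cB (cB (c'.2.1 0)) (cB (c'.2.1 1)) := mAf_pos BB cB c'
    rw [hm _ _]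
    linarith
  · intro c
    have key : ∀ c' : Cons BB, Y0f AA BB cA cB c' c
        = (if cB (c'.2.1 0) = cA (c.2.1 0) ∧ cB (c'.2.1 1) = cA (c.2.1 1)
            then (1:ℝ) else 0)
          * (mAf AA cA (cA (c.2.1 0)) (cA (c.2.1 1)))⁻¹ := by
      intro c'
      unfold Y0f
      by_cases h : cB (c'.2.1 0) = cA (c.2.1 0) ∧ cB (c'.2.1 1) = cA (c.2.1 1)
      · rw [if_pos h, if_pos h, one_mul]
      · rw [if_neg h, if_neg h, zero_mul]
    simp only [key]
    rw [← Finset.sum_mul]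
    have hn : (∑ c' : Cons BB, if cB (c'.2.1 0) = cA (c.2.1 0) ∧ cB (c'.2.1 1) = cA (c.2.1 1)
        then (1:ℝ) else 0) = mAf BB cB (cA (c.2.1 0)) (cA (c.2.1 1)) := rfl
    rw [hn, ← hm _ _]
    apply mul_inv_cancel₀
    have h1 : (1:ℝ) ≤ mAf AA cA (cA (c.2.1 0)) (cA (c.2.1 1)) := mAf_pos AA cA c
    linarith

end AuxDS
section AuxEq

variable {A B : Type} [Fintype A] [Fintype B] {C : Type}

lemma eq1lem (AA : Struct Unit (fun _ => 2) A) (BB : Struct Unit (fun _ => 2) B)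
    (hAsymm : ∀ u ∈ AA.rel (), (![u 1, u 0] : Fin 2 → A) ∈ AA.rel ())
    (hAirr : ∀ u ∈ AA.rel (), u 0 ≠ u 1)
    (hBsymm : ∀ u ∈ BB.rel (), (![u 1, u 0] : Fin 2 → B) ∈ BB.rel ())
    (hBirr : ∀ u ∈ BB.rel (), u 0 ≠ u 1)
    (cA : A → C) (cB : B → C)
    (H2R : ∀ a a', cA a = cA a' → ∀ v, DAf AA cA v a = DAf AA cA v a')
    (H4R : ∀ a b, cA a = cB b → ∀ v, DAf AA cA v a = DAf BB cB v b)
    (X0DS : IsDoublyStochastic (X0f cA cB))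
    (Y0DS : IsDoublyStochastic (Y0f AA BB cA cB))
    (ℓ : Label Unit (fun _ => 2)) :
    X0f cA cB * labMat AA ℓ = labMat BB ℓ * Y0f AA BB cA cB := by
  ext b c
  rw [Matrix.mul_apply, Matrix.mul_apply]
  have hc01 : c.2.1 0 ≠ c.2.1 1 := cons_ne AA hAirr c
  by_cases h0 : (0 : Fin 2) ∈ ℓ.2 <;> by_cases h1 : (1 : Fin 2) ∈ ℓ.2
  · -- ℓ.2 contains 0 and 1: both sides vanish
    rw [Finset.sum_eq_zero, Finset.sum_eq_zero]
    · intro c' _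
      have hlab : lab BB b c' ≠ ℓ := by
        intro h
        obtain ⟨hB0, hB1⟩ := (lab_iff' BB b c' ℓ).1 h
        exact cons_ne BB hBirr c' ((hB0.2 h0).trans (hB1.2 h1).symm)
      simp [labMat, hlab]
    · intro a _
      have hlab : lab AA a c ≠ ℓ := by
        intro h
        obtain ⟨hA0, hA1⟩ := (lab_iff' AA a c ℓ).1 h
        exact hc01 ((hA0.2 h0).trans (hA1.2 h1).symm)
      simp [labMat, hlab]
  · -- ℓ.2 = {0}
    have hlabA : ∀ a, labMat AA ℓ a c
        = if a = c.2.1 0 then 1 else 0 := by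
      intro a
      unfold labMat
      by_cases ha : a = c.2.1 0
      · have : lab AA a c = ℓ := (lab_iff' AA a c ℓ).2
          ⟨⟨fun _ => h0, fun _ => ha.symm⟩,
           ⟨fun hh => absurd (hh.trans ha).symm hc01, fun hS => absurd hS h1⟩⟩
        rw [if_pos this, if_pos ha]
      · rw [if_neg (fun h => ha (((lab_iff' AA a c ℓ).1 h).1.2 h0).symm), if_neg ha]
    have hlabB : ∀ c' : Cons BB, labMat BB ℓ b c'
        = if c'.2.1 0 = b then 1 else 0 := by
      intro c'
      unfold labMat
      by_cases hb : c'.2.1 0 = b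
      · have : lab BB b c' = ℓ := (lab_iff' BB b c' ℓ).2
          ⟨⟨fun _ => h0, fun _ => hb⟩,
           ⟨fun hh => absurd (hh.trans hb.symm).symm (cons_ne BB hBirr c'),
            fun hS => absurd hS h1⟩⟩
        rw [if_pos this, if_pos hb]
      · rw [if_neg (fun h => hb (((lab_iff' BB b c' ℓ).1 h).1.2 h0)), if_neg hb]
    simp only [hlabA, hlabB, mul_ite, mul_one, mul_zero]
    rw [Finset.sum_ite_eq' Finset.univ (c.2.1 0) (fun a => X0f cA cB b a),
      if_pos (Finset.mem_univ _)]
    exact (E0lem AA BB cA cB H2R H4R b c).symm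
  · -- ℓ.2 = {1}
    have hlabA : ∀ a, labMat AA ℓ a c
        = if a = c.2.1 1 then 1 else 0 := by
      intro a
      unfold labMat
      by_cases ha : a = c.2.1 1
      · have : lab AA a c = ℓ := (lab_iff' AA a c ℓ).2
          ⟨⟨fun hh => absurd (hh.trans ha) hc01, fun hS => absurd hS h0⟩,
           ⟨fun _ => h1, fun _ => ha.symm⟩⟩
        rw [if_pos this, if_pos ha]
      · rw [if_neg (fun h => ha (((lab_iff' AA a c ℓ).1 h).2.2 h1).symm), if_neg ha]
    have hlabB : ∀ c' : Cons BB, labMat BB ℓ b c'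
        = if c'.2.1 1 = b then 1 else 0 := by
      intro c'
      unfold labMat
      by_cases hb : c'.2.1 1 = b
      · have : lab BB b c' = ℓ := (lab_iff' BB b c' ℓ).2
          ⟨⟨fun hh => absurd (hh.trans hb.symm) (cons_ne BB hBirr c'),
            fun hS => absurd hS h0⟩,
           ⟨fun _ => h1, fun _ => hb⟩⟩
        rw [if_pos this, if_pos hb]
      · rw [if_neg (fun h => hb (((lab_iff' BB b c' ℓ).1 h).2.2 h1)), if_neg hb]
    simp only [hlabA, hlabB, mul_ite, mul_one, mul_zero]
    rw [Finset.sum_ite_eq' Finset.univ (c.2.1 1) (fun a => X0f cA cB b a),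
      if_pos (Finset.mem_univ _)]
    exact (E1lem AA BB hAsymm hBsymm cA cB H2R H4R b c).symm
  · -- ℓ.2 contains neither 0 nor 1
    have hlabA : ∀ a, labMat AA ℓ a c
        = 1 - (if a = c.2.1 0 then 1 else 0) - (if a = c.2.1 1 then 1 else 0) := by
      intro a
      unfold labMat
      by_cases ha0 : a = c.2.1 0
      · rw [if_neg (fun h => h0 (((lab_iff' AA a c ℓ).1 h).1.1 ha0.symm)), if_pos ha0,
          if_neg (fun h => hc01 ((ha0.symm.trans h : (c.2.1 0 : A) = c.2.1 1)))]
        norm_num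
      · by_cases ha1 : a = c.2.1 1
        · rw [if_neg (fun h => h1 (((lab_iff' AA a c ℓ).1 h).2.1 ha1.symm)), if_neg ha0,
            if_pos ha1]
          norm_num
        · rw [if_pos ((lab_iff' AA a c ℓ).2
            ⟨⟨fun h => absurd h.symm ha0, fun hS => absurd hS h0⟩,
             ⟨fun h => absurd h.symm ha1, fun hS => absurd hS h1⟩⟩), if_neg ha0, if_neg ha1]
          norm_num
    have hlabB : ∀ c' : Cons BB, labMat BB ℓ b c'
        = 1 - (if c'.2.1 0 = b then 1 else 0) - (if c'.2.1 1 = b then 1 else 0) := by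
      intro c'
      unfold labMat
      have hb01 : c'.2.1 0 ≠ c'.2.1 1 := cons_ne BB hBirr c'
      by_cases hb0 : c'.2.1 0 = b
      · rw [if_neg (fun h => h0 (((lab_iff' BB b c' ℓ).1 h).1.1 hb0)), if_pos hb0,
          if_neg (fun h => hb01 (hb0.trans h.symm))]
        norm_num
      · by_cases hb1 : c'.2.1 1 = b
        · rw [if_neg (fun h => h1 (((lab_iff' BB b c' ℓ).1 h).2.1 hb1)), if_neg hb0,
            if_pos hb1]
          norm_num
        · rw [if_pos ((lab_iff' BB b c' ℓ).2
            ⟨⟨fun h => absurd h hb0, fun hS => absurd hS h0⟩,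
             ⟨fun h => absurd h hb1, fun hS => absurd hS h1⟩⟩), if_neg hb0, if_neg hb1]
          norm_num
    simp only [hlabA, hlabB, mul_sub, sub_mul, mul_one, one_mul, Finset.sum_sub_distrib]
    rw [X0DS.2.1 b, Y0DS.2.2 c]
    rw [E0lem AA BB cA cB H2R H4R b c, E1lem AA BB hAsymm hBsymm cA cB H2R H4R b c]
    simp only [mul_ite, mul_one, mul_zero]
    rw [Finset.sum_ite_eq' Finset.univ (c.2.1 0) (fun a => X0f cA cB b a),
      Finset.sum_ite_eq' Finset.univ (c.2.1 1) (fun a => X0f cA cB b a),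
      if_pos (Finset.mem_univ _), if_pos (Finset.mem_univ _)]

end AuxEq
section AuxEq2

variable {A B : Type} [Fintype A] [Fintype B] {C : Type}

lemma eq2lem (AA : Struct Unit (fun _ => 2) A) (BB : Struct Unit (fun _ => 2) B)
    (hAsymm : ∀ u ∈ AA.rel (), (![u 1, u 0] : Fin 2 → A) ∈ AA.rel ())
    (hAirr : ∀ u ∈ AA.rel (), u 0 ≠ u 1)
    (hBsymm : ∀ u ∈ BB.rel (), (![u 1, u 0] : Fin 2 → B) ∈ BB.rel ())
    (hBirr : ∀ u ∈ BB.rel (), u 0 ≠ u 1)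
    (cA : A → C) (cB : B → C)
    (H2R : ∀ a a', cA a = cA a' → ∀ v, DAf AA cA v a = DAf AA cA v a')
    (H4R : ∀ a b, cA a = cB b → ∀ v, DAf AA cA v a = DAf BB cB v b)
    (X0DS : IsDoublyStochastic (X0f cA cB))
    (Y0DS : IsDoublyStochastic (Y0f AA BB cA cB))
    (ℓ : Label Unit (fun _ => 2)) :
    labMat AA ℓ * (Y0f AA BB cA cB).transpose
      = (X0f cA cB).transpose * labMat BB ℓ := by
  ext a c'
  rw [Matrix.mul_apply, Matrix.mul_apply]
  simp only [Matrix.transpose_apply]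
  have hb01 : c'.2.1 0 ≠ c'.2.1 1 := cons_ne BB hBirr c'
  by_cases h0 : (0 : Fin 2) ∈ ℓ.2 <;> by_cases h1 : (1 : Fin 2) ∈ ℓ.2
  · rw [Finset.sum_eq_zero, Finset.sum_eq_zero]
    · intro b _
      have hlab : lab BB b c' ≠ ℓ := by
        intro h
        obtain ⟨hB0, hB1⟩ := (lab_iff' BB b c' ℓ).1 h
        exact hb01 ((hB0.2 h0).trans (hB1.2 h1).symm)
      simp [labMat, hlab]
    · intro c _
      have hlab : lab AA a c ≠ ℓ := by
        intro h
        obtain ⟨hA0, hA1⟩ := (lab_iff' AA a c ℓ).1 h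
        exact cons_ne AA hAirr c ((hA0.2 h0).trans (hA1.2 h1).symm)
      simp [labMat, hlab]
  · -- ℓ.2 = {0}
    have hlabA : ∀ c : Cons AA, labMat AA ℓ a c
        = if c.2.1 0 = a then (1:ℝ) else 0 := by
      intro c
      unfold labMat
      by_cases ha : c.2.1 0 = a
      · have : lab AA a c = ℓ := (lab_iff' AA a c ℓ).2
          ⟨⟨fun _ => h0, fun _ => ha⟩,
           ⟨fun hh => absurd (ha.trans hh.symm) (cons_ne AA hAirr c),
            fun hS => absurd hS h1⟩⟩
        rw [if_pos this, if_pos ha]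
      · rw [if_neg (fun h => ha (((lab_iff' AA a c ℓ).1 h).1.2 h0)), if_neg ha]
    have hlabB : ∀ b : B, labMat BB ℓ b c'
        = if b = c'.2.1 0 then (1:ℝ) else 0 := by
      intro b
      unfold labMat
      by_cases hb : b = c'.2.1 0
      · have : lab BB b c' = ℓ := (lab_iff' BB b c' ℓ).2
          ⟨⟨fun _ => h0, fun _ => hb.symm⟩,
           ⟨fun hh => absurd (hh.trans hb).symm hb01, fun hS => absurd hS h1⟩⟩
        rw [if_pos this, if_pos hb]
      · rw [if_neg (fun h => hb (((lab_iff' BB b c' ℓ).1 h).1.2 h0).symm), if_neg hb]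
    simp only [hlabA, hlabB]
    rw [F0lem AA BB cA cB H2R H4R a c']
    simp only [mul_ite, mul_one, mul_zero]
    rw [Finset.sum_ite_eq' Finset.univ (c'.2.1 0) (fun b => X0f cA cB b a),
      if_pos (Finset.mem_univ _)]
  · -- ℓ.2 = {1}
    have hlabA : ∀ c : Cons AA, labMat AA ℓ a c
        = if c.2.1 1 = a then (1:ℝ) else 0 := by
      intro c
      unfold labMat
      by_cases ha : c.2.1 1 = a
      · have : lab AA a c = ℓ := (lab_iff' AA a c ℓ).2
          ⟨⟨fun hh => absurd (hh.trans ha.symm) (cons_ne AA hAirr c),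
            fun hS => absurd hS h0⟩,
           ⟨fun _ => h1, fun _ => ha⟩⟩
        rw [if_pos this, if_pos ha]
      · rw [if_neg (fun h => ha (((lab_iff' AA a c ℓ).1 h).2.2 h1)), if_neg ha]
    have hlabB : ∀ b : B, labMat BB ℓ b c'
        = if b = c'.2.1 1 then (1:ℝ) else 0 := by
      intro b
      unfold labMat
      by_cases hb : b = c'.2.1 1
      · have : lab BB b c' = ℓ := (lab_iff' BB b c' ℓ).2
          ⟨⟨fun hh => absurd (hh.trans hb) hb01,
            fun hS => absurd hS h0⟩,
           ⟨fun _ => h1, fun _ => hb.symm⟩⟩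
        rw [if_pos this, if_pos hb]
      · rw [if_neg (fun h => hb (((lab_iff' BB b c' ℓ).1 h).2.2 h1).symm), if_neg hb]
    simp only [hlabA, hlabB]
    rw [F1lem AA BB hAsymm hBsymm cA cB H2R H4R a c']
    simp only [mul_ite, mul_one, mul_zero]
    rw [Finset.sum_ite_eq' Finset.univ (c'.2.1 1) (fun b => X0f cA cB b a),
      if_pos (Finset.mem_univ _)]
  · -- ℓ.2 contains neither
    have hlabA : ∀ c : Cons AA, labMat AA ℓ a c
        = 1 - (if c.2.1 0 = a then (1:ℝ) else 0) - (if c.2.1 1 = a then 1 else 0) := by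
      intro c
      unfold labMat
      by_cases ha0 : c.2.1 0 = a
      · rw [if_neg (fun h => h0 (((lab_iff' AA a c ℓ).1 h).1.1 ha0)), if_pos ha0,
          if_neg (fun h => (cons_ne AA hAirr c) (ha0.trans h.symm))]
        norm_num
      · by_cases ha1 : c.2.1 1 = a
        · rw [if_neg (fun h => h1 (((lab_iff' AA a c ℓ).1 h).2.1 ha1)), if_neg ha0,
            if_pos ha1]
          norm_num
        · rw [if_pos ((lab_iff' AA a c ℓ).2
            ⟨⟨fun h => absurd h ha0, fun hS => absurd hS h0⟩,
             ⟨fun h => absurd h ha1, fun hS => absurd hS h1⟩⟩), if_neg ha0, if_neg ha1]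
          norm_num
    have hlabB : ∀ b : B, labMat BB ℓ b c'
        = 1 - (if b = c'.2.1 0 then (1:ℝ) else 0) - (if b = c'.2.1 1 then 1 else 0) := by
      intro b
      unfold labMat
      by_cases hb0 : b = c'.2.1 0
      · rw [if_neg (fun h => h0 (((lab_iff' BB b c' ℓ).1 h).1.1 hb0.symm)), if_pos hb0,
          if_neg (fun h => hb01 (hb0.symm.trans h))]
        norm_num
      · by_cases hb1 : b = c'.2.1 1
        · rw [if_neg (fun h => h1 (((lab_iff' BB b c' ℓ).1 h).2.1 hb1.symm)), if_neg hb0,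
            if_pos hb1]
          norm_num
        · rw [if_pos ((lab_iff' BB b c' ℓ).2
            ⟨⟨fun h => absurd h.symm hb0, fun hS => absurd hS h0⟩,
             ⟨fun h => absurd h.symm hb1, fun hS => absurd hS h1⟩⟩), if_neg hb0, if_neg hb1]
          norm_num
    simp only [hlabA, hlabB, mul_sub, sub_mul, mul_one, one_mul, Finset.sum_sub_distrib]
    rw [Y0DS.2.1 c', X0DS.2.2 a]
    rw [F0lem AA BB cA cB H2R H4R a c', F1lem AA BB hAsymm hBsymm cA cB H2R H4R a c']
    simp only [mul_ite, mul_one, mul_zero]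
    rw [Finset.sum_ite_eq' Finset.univ (c'.2.1 0) (fun b => X0f cA cB b a),
      Finset.sum_ite_eq' Finset.univ (c'.2.1 1) (fun b => X0f cA cB b a),
      if_pos (Finset.mem_univ _), if_pos (Finset.mem_univ _)]

end AuxEq2
section AuxFinal

variable {A B : Type} [Fintype A] [Fintype B]

lemma adj_factor (AA : Struct Unit (fun _ => 2) A)
    (hAirr : ∀ u ∈ AA.rel (), u 0 ≠ u 1) :
    adjMat AA = labMat AA ⟨(), {0}⟩ * (labMat AA ⟨(), {1}⟩).transpose := by
  ext a a'
  rw [Matrix.mul_apply]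
  simp only [Matrix.transpose_apply]
  have key : ∀ c : Cons AA,
      labMat AA (⟨(), {0}⟩ : Label Unit (fun _ => 2)) a c
        * labMat AA (⟨(), {1}⟩ : Label Unit (fun _ => 2)) a' c
      = if c.2.1 0 = a ∧ c.2.1 1 = a' then 1 else 0 := by
    intro c
    unfold labMat
    have hne := cons_ne AA hAirr c
    by_cases h : c.2.1 0 = a ∧ c.2.1 1 = a'
    · obtain ⟨hc0, hc1⟩ := h
      have l0 : lab AA a c = ⟨(), {0}⟩ := (lab_iff AA a c {0}).2
        ⟨⟨fun _ => by decide, fun _ => hc0⟩,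
         ⟨fun hh => absurd (hh.trans hc0.symm).symm hne,
          fun hS => absurd hS (by decide)⟩⟩
      have l1 : lab AA a' c = ⟨(), {1}⟩ := (lab_iff AA a' c {1}).2
        ⟨⟨fun hh => absurd (hh.trans hc1.symm) hne,
          fun hS => absurd hS (by decide)⟩,
         ⟨fun _ => by decide, fun _ => hc1⟩⟩
      rw [if_pos l0, if_pos l1, if_pos ⟨hc0, hc1⟩, one_mul]
    · rw [if_neg h]
      rcases not_and_or.1 h with h' | h'
      · rw [if_neg (fun hl => h' (((lab_iff AA a c {0}).1 hl).1.2 (by decide))), zero_mul]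
      · rw [if_neg (fun hl => h' (((lab_iff AA a' c {1}).1 hl).2.2 (by decide))), mul_zero]
  simp only [key]
  rw [sum_cons AA (fun x x' => if x = a ∧ x' = a' then (1:ℝ) else 0)]
  rw [Finset.sum_eq_single a]
  · rw [Finset.sum_eq_single a']
    · by_cases h : ![a,a'] ∈ AA.rel ()
      · rw [if_pos h, if_pos ⟨rfl, rfl⟩]
        unfold adjMat
        rw [if_pos h]
      · rw [if_neg h]
        unfold adjMat
        rw [if_neg h]
    · intro x' _ hx'
      by_cases h : ![a,x'] ∈ AA.rel ()
      · rw [if_pos h, if_neg (fun hh => hx' hh.2)]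
      · rw [if_neg h]
    · intro h
      exact absurd (Finset.mem_univ a') h
  · intro x _ hx
    refine Finset.sum_eq_zero fun x' _ => ?_
    by_cases h : ![x,x'] ∈ AA.rel ()
    · rw [if_pos h, if_neg (fun hh => hx hh.1)]
    · rw [if_neg h]
  · intro h
    exact absurd (Finset.mem_univ a) h

lemma construct {C : Type} (AA : Struct Unit (fun _ => 2) A) (BB : Struct Unit (fun _ => 2) B)
    (hAsymm : ∀ u ∈ AA.rel (), (![u 1, u 0] : Fin 2 → A) ∈ AA.rel ())
    (hAirr : ∀ u ∈ AA.rel (), u 0 ≠ u 1)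
    (hBsymm : ∀ u ∈ BB.rel (), (![u 1, u 0] : Fin 2 → B) ∈ BB.rel ())
    (hBirr : ∀ u ∈ BB.rel (), u 0 ≠ u 1)
    (cA : A → C) (cB : B → C)
    (H1R : ∀ v, nAf cA v = nAf cB v)
    (H2R : ∀ a a', cA a = cA a' → ∀ v, DAf AA cA v a = DAf AA cA v a')
    (H3R : ∀ b b', cB b = cB b' → ∀ v, DAf BB cB v b = DAf BB cB v b')
    (H4R : ∀ a b, cA a = cB b → ∀ v, DAf AA cA v a = DAf BB cB v b) :
    FracIso AA BB := by
  have hm := hm_eq AA BB cA cB H1R H2R H3R H4R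
  have X0DS := X0f_DS cA cB H1R
  have Y0DS := Y0f_DS AA BB cA cB hm
  exact ⟨X0f cA cB, Y0f AA BB cA cB, X0DS, Y0DS, fun ℓ =>
    ⟨eq1lem AA BB hAsymm hAirr hBsymm hBirr cA cB H2R H4R X0DS Y0DS ℓ,
     eq2lem AA BB hAsymm hAirr hBsymm hBirr cA cB H2R H4R X0DS Y0DS ℓ⟩⟩

end AuxFinal

theorem stmt3 {A B : Type} [Fintype A] [Fintype B]
    (AA : Struct Unit (fun _ => 2) A) (BB : Struct Unit (fun _ => 2) B)
    (hAsymm : ∀ u ∈ AA.rel (), (![u 1, u 0] : Fin 2 → A) ∈ AA.rel ())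
    (hAirr : ∀ u ∈ AA.rel (), u 0 ≠ u 1)
    (hBsymm : ∀ u ∈ BB.rel (), (![u 1, u 0] : Fin 2 → B) ∈ BB.rel ())
    (hBirr : ∀ u ∈ BB.rel (), u 0 ≠ u 1) :
    FracIso AA BB ↔
      ∃ X' : Matrix B A ℝ, IsDoublyStochastic X' ∧
        X' * adjMat AA = adjMat BB * X' := by
  constructor
  · rintro ⟨X, Y, hX, hY, heq⟩
    refine ⟨X, hX, ?_⟩
    have hYT : Y * (labMat AA ⟨(), {1}⟩).transpose
        = (labMat BB ⟨(), {1}⟩).transpose * X := by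
      have h := congrArg Matrix.transpose (heq ⟨(), {1}⟩).2
      rw [Matrix.transpose_mul, Matrix.transpose_mul, Matrix.transpose_transpose] at h
      exact h
    rw [adj_factor AA hAirr, adj_factor BB hBirr, ← Matrix.mul_assoc,
      (heq ⟨(), {0}⟩).1, Matrix.mul_assoc, hYT, ← Matrix.mul_assoc]
  · rintro ⟨X, ⟨hpos, hrow, hcol⟩, hcomm⟩
    have hsymA : ∀ x y : A, (![x,y] ∈ AA.rel ()) ↔ (![y,x] ∈ AA.rel ()) := by
      intro x y
      constructor <;> intro h <;> · have := hAsymm _ h; simpa using this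
    have hsymB : ∀ x y : B, (![x,y] ∈ BB.rel ()) ↔ (![y,x] ∈ BB.rel ()) := by
      intro x y
      constructor <;> intro h <;> · have := hBsymm _ h; simpa using this
    have hcommM : (Matrix.of fun b a => X b a)
          * (Matrix.of fun (a a' : A) => if ![a,a'] ∈ AA.rel () then (1:ℝ) else 0)
        = (Matrix.of fun (b b' : B) => if ![b,b'] ∈ BB.rel () then (1:ℝ) else 0)
          * (Matrix.of fun b a => X b a) := hcomm
    obtain ⟨K, hstab⟩ := exists_stable (fun (a a' : A) => ![a,a'] ∈ AA.rel ())
      (fun (b b' : B) => ![b,b'] ∈ BB.rel ())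
    have hsupp := support_col (fun (a a' : A) => ![a,a'] ∈ AA.rel ())
      (fun (b b' : B) => ![b,b'] ∈ BB.rel ()) X hpos hrow hcol hcommM hsymA hsymB K
    have e1 := ind_transfer X (col (fun (a a' : A) => ![a,a'] ∈ AA.rel ()) K)
      (col (fun (b b' : B) => ![b,b'] ∈ BB.rel ()) K) hrow hsupp
    have hDA : ∀ (a : A) (v : Col K),
        DAf AA (col (fun (a a' : A) => ![a,a'] ∈ AA.rel ()) K) v a
        = (Multiset.count v (col (fun (a a' : A) => ![a,a'] ∈ AA.rel ()) (K+1) a) : ℝ) := by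
      intro a v
      rw [count_col]
      unfold DAf
      exact (card_filter_real _).symm
    have hDB : ∀ (b : B) (v : Col K),
        DAf BB (col (fun (b b' : B) => ![b,b'] ∈ BB.rel ()) K) v b
        = (Multiset.count v (col (fun (b b' : B) => ![b,b'] ∈ BB.rel ()) (K+1) b) : ℝ) := by
      intro b v
      rw [count_col]
      unfold DAf
      exact (card_filter_real _).symm
    have H1R : ∀ v, nAf (col (fun (a a' : A) => ![a,a'] ∈ AA.rel ()) K) v
        = nAf (col (fun (b b' : B) => ![b,b'] ∈ BB.rel ()) K) v := by
      intro v
      unfold nAf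
      calc ∑ a, (if col (fun (a a' : A) => ![a,a'] ∈ AA.rel ()) K a = v then (1:ℝ) else 0)
          = ∑ a, (∑ b, X b a)
            * (if col (fun (a a' : A) => ![a,a'] ∈ AA.rel ()) K a = v then 1 else 0) := by
            refine Finset.sum_congr rfl fun a _ => ?_
            rw [hcol a, one_mul]
        _ = ∑ a, ∑ b, X b a
            * (if col (fun (a a' : A) => ![a,a'] ∈ AA.rel ()) K a = v then 1 else 0) := by
            refine Finset.sum_congr rfl fun a _ => ?_
            rw [Finset.sum_mul]
        _ = ∑ b, ∑ a, X b a
            * (if col (fun (a a' : A) => ![a,a'] ∈ AA.rel ()) K a = v then 1 else 0) :=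
            Finset.sum_comm
        _ = ∑ b, (if col (fun (b b' : B) => ![b,b'] ∈ BB.rel ()) K b = v then 1 else 0) := by
            refine Finset.sum_congr rfl fun b _ => ?_
            exact e1 v b
    have H2R : ∀ a a', col (fun (a a' : A) => ![a,a'] ∈ AA.rel ()) K a
          = col (fun (a a' : A) => ![a,a'] ∈ AA.rel ()) K a' →
        ∀ v, DAf AA (col (fun (a a' : A) => ![a,a'] ∈ AA.rel ()) K) v a
          = DAf AA (col (fun (a a' : A) => ![a,a'] ∈ AA.rel ()) K) v a' := by
      intro a a' h v
      rw [hDA a v, hDA a' v]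
      exact_mod_cast congrArg (Multiset.count v) (hstab (Sum.inl a) (Sum.inl a') h)
    have H3R : ∀ b b', col (fun (b b' : B) => ![b,b'] ∈ BB.rel ()) K b
          = col (fun (b b' : B) => ![b,b'] ∈ BB.rel ()) K b' →
        ∀ v, DAf BB (col (fun (b b' : B) => ![b,b'] ∈ BB.rel ()) K) v b
          = DAf BB (col (fun (b b' : B) => ![b,b'] ∈ BB.rel ()) K) v b' := by
      intro b b' h v
      rw [hDB b v, hDB b' v]
      exact_mod_cast congrArg (Multiset.count v) (hstab (Sum.inr b) (Sum.inr b') h)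
    have H4R : ∀ a b, col (fun (a a' : A) => ![a,a'] ∈ AA.rel ()) K a
          = col (fun (b b' : B) => ![b,b'] ∈ BB.rel ()) K b →
        ∀ v, DAf AA (col (fun (a a' : A) => ![a,a'] ∈ AA.rel ()) K) v a
          = DAf BB (col (fun (b b' : B) => ![b,b'] ∈ BB.rel ()) K) v b := by
      intro a b h v
      rw [hDA a v, hDB b v]
      exact_mod_cast congrArg (Multiset.count v) (hstab (Sum.inl a) (Sum.inr b) h)
    exact construct AA BB hAsymm hAirr hBsymm hBirr
      (col (fun (a a' : A) => ![a,a'] ∈ AA.rel ()) K)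
      (col (fun (b b' : B) => ![b,b'] ∈ BB.rel ()) K) H1R H2R H3R H4R


end
end

section
/- Let V and W be finite index sets, let X ∈ ℝ^{V×V} and Y ∈ ℝ^{W×W} be doubly stochastic indecomposable matrices, and let M₁, M₂ ∈ ℝ^{V×W} satisfy X M₁ = M₂ Y and M₁ Yᵀ = Xᵀ M₂. Then there exist real numbers c and d such that M₁·𝟏 = M₂·𝟏 = c·𝟏 and 𝟏ᵀ M₁ = 𝟏ᵀ M₂ = d·𝟏ᵀ, i.e., all row sums of M₁ and M₂ equal c and all column sums of M₁ and M₂ equal d. -/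
attribute [local instance] Classical.propDecidable

set_option maxHeartbeats 1000000

noncomputable section

variable {σ : Type} {ar : σ → ℕ}

lemma stmt12_aux {V : Type} [Fintype V] (Z : Matrix V V ℝ)
    (hZ : IsDoublyStochastic Z) (hind : ¬ MDecomposable Z) (u r : V → ℝ)
    (h1 : ∀ v, ∑ w, Z v w * u w = r v)
    (h2 : ∀ w, ∑ v, Z v w * r v = u w) :
    ∃ c : ℝ, (∀ v, u v = c) ∧ (∀ v, r v = c) := by
  rcases isEmpty_or_nonempty V with hV | hV
  · exact ⟨0, fun v => (hV.false v).elim, fun v => (hV.false v).elim⟩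
  have hne : (Finset.univ : Finset V).Nonempty := Finset.univ_nonempty
  set Mu := Finset.univ.sup' hne u with hMu
  set Mr := Finset.univ.sup' hne r with hMr
  have hu_le : ∀ v, u v ≤ Mu := fun v => Finset.le_sup' u (Finset.mem_univ v)
  have hr_le : ∀ v, r v ≤ Mr := fun v => Finset.le_sup' r (Finset.mem_univ v)
  have hr_le_Mu : ∀ v, r v ≤ Mu := by
    intro v
    rw [← h1 v]
    calc ∑ w, Z v w * u w ≤ ∑ w, Z v w * Mu := by
          apply Finset.sum_le_sum
          intro w _
          exact mul_le_mul_of_nonneg_left (hu_le w) (hZ.1 v w)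
      _ = Mu := by rw [← Finset.sum_mul, hZ.2.1 v, one_mul]
  have hu_le_Mr : ∀ w, u w ≤ Mr := by
    intro w
    rw [← h2 w]
    calc ∑ v, Z v w * r v ≤ ∑ v, Z v w * Mr := by
          apply Finset.sum_le_sum
          intro v _
          exact mul_le_mul_of_nonneg_left (hr_le v) (hZ.1 v w)
      _ = Mr := by rw [← Finset.sum_mul, hZ.2.2 w, one_mul]
  have hMrMu : Mr = Mu := le_antisymm
    (Finset.sup'_le hne r fun v _ => hr_le_Mu v)
    (Finset.sup'_le hne u fun v _ => hu_le_Mr v)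
  set M := Mu with hM
  have hr_le' : ∀ v, r v ≤ M := hr_le_Mu
  -- key zero lemmas
  have keyrow : ∀ v, r v = M → ∀ w, u w ≠ M → Z v w = 0 := by
    intro v hv w hw
    have hsum : ∑ w, Z v w * (M - u w) = 0 := by
      have : ∑ w, Z v w * (M - u w) = (∑ w, Z v w * M) - ∑ w, Z v w * u w := by
        rw [← Finset.sum_sub_distrib]
        exact Finset.sum_congr rfl fun w _ => by ring
      rw [this, ← Finset.sum_mul, hZ.2.1 v, one_mul, h1 v, hv, sub_self]
    have hnn : ∀ w ∈ Finset.univ, 0 ≤ Z v w * (M - u w) := fun w _ =>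
      mul_nonneg (hZ.1 v w) (sub_nonneg.mpr (hu_le w))
    have hzero := (Finset.sum_eq_zero_iff_of_nonneg hnn).mp hsum w (Finset.mem_univ w)
    rcases mul_eq_zero.mp hzero with h | h
    · exact h
    · exact absurd (by linarith [sub_eq_zero.mp h] : u w = M) hw
  have keycol : ∀ w, u w = M → ∀ v, r v ≠ M → Z v w = 0 := by
    intro w hw v hv
    have hsum : ∑ v, Z v w * (M - r v) = 0 := by
      have : ∑ v, Z v w * (M - r v) = (∑ v, Z v w * M) - ∑ v, Z v w * r v := by
        rw [← Finset.sum_sub_distrib]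
        exact Finset.sum_congr rfl fun v _ => by ring
      rw [this, ← Finset.sum_mul, hZ.2.2 w, one_mul, h2 w, hw, sub_self]
    have hnn : ∀ v ∈ Finset.univ, 0 ≤ Z v w * (M - r v) := fun v _ =>
      mul_nonneg (hZ.1 v w) (sub_nonneg.mpr (hr_le' v))
    have hzero := (Finset.sum_eq_zero_iff_of_nonneg hnn).mp hsum v (Finset.mem_univ v)
    rcases mul_eq_zero.mp hzero with h | h
    · exact h
    · exact absurd (by linarith [sub_eq_zero.mp h] : r v = M) hv
  -- the maximum is attained
  obtain ⟨v₀, _, hv₀⟩ := Finset.exists_mem_eq_sup' hne u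
  obtain ⟨v₁, _, hv₁⟩ := Finset.exists_mem_eq_sup' hne r
  have hu₀ : u v₀ = M := hv₀.symm
  have hr₁ : r v₁ = M := by rw [← hMrMu]; exact hv₁.symm
  have hall : (∀ v, u v = M) ∧ (∀ v, r v = M) := by
    by_contra hc
    apply hind
    refine ⟨{v | r v = M}, {w | u w = M}, Or.inl ⟨v₁, hr₁⟩, ?_, ?_⟩
    · rw [not_and_or] at hc
      push_neg at hc
      rcases hc with ⟨w, hw⟩ | ⟨v, hv⟩
      · exact Or.inr ⟨w, hw⟩
      · exact Or.inl ⟨v, hv⟩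
    · rintro v w (⟨hv, hw⟩ | ⟨hv, hw⟩)
      · exact keyrow v hv w hw
      · exact keycol w hw v hv
  exact ⟨M, hall.1, hall.2⟩

theorem stmt12 {V W : Type} [Fintype V] [Fintype W]
    (X : Matrix V V ℝ) (Y : Matrix W W ℝ) (M₁ M₂ : Matrix V W ℝ)
    (hX : IsDoublyStochastic X) (hY : IsDoublyStochastic Y)
    (hXind : ¬ MDecomposable X) (hYind : ¬ MDecomposable Y)
    (h1 : X * M₁ = M₂ * Y) (h2 : M₁ * Y.transpose = X.transpose * M₂) :
    ∃ c d : ℝ, (∀ v, ∑ w, M₁ v w = c) ∧ (∀ v, ∑ w, M₂ v w = c) ∧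
      (∀ w, ∑ v, M₁ v w = d) ∧ (∀ w, ∑ v, M₂ v w = d) := by
  -- row sums
  have hrow1 : ∀ v, ∑ x, X v x * (∑ w, M₁ x w) = ∑ w, M₂ v w := by
    intro v
    have h := fun w => congrFun (congrFun h1 v) w
    simp only [Matrix.mul_apply] at h
    calc ∑ x, X v x * (∑ w, M₁ x w) = ∑ x, ∑ w, X v x * M₁ x w := by
          simp [Finset.mul_sum]
      _ = ∑ w, ∑ x, X v x * M₁ x w := Finset.sum_comm
      _ = ∑ w, ∑ x, M₂ v x * Y x w := by exact Finset.sum_congr rfl fun w _ => h w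
      _ = ∑ x, M₂ v x * (∑ w, Y x w) := by rw [Finset.sum_comm]; simp [Finset.mul_sum]
      _ = ∑ w, M₂ v w := by
          exact Finset.sum_congr rfl fun x _ => by rw [hY.2.1 x, mul_one]
  have hrow2 : ∀ x, ∑ v, X v x * (∑ w, M₂ v w) = ∑ w, M₁ x w := by
    intro x
    have h := fun w' => congrFun (congrFun h2 x) w'
    simp only [Matrix.mul_apply, Matrix.transpose_apply] at h
    calc ∑ v, X v x * (∑ w, M₂ v w) = ∑ v, ∑ w, X v x * M₂ v w := by
          simp [Finset.mul_sum]
      _ = ∑ w, ∑ v, X v x * M₂ v w := Finset.sum_comm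
      _ = ∑ w', ∑ w, M₁ x w * Y w' w := by
          exact Finset.sum_congr rfl fun w _ => (h w).symm
      _ = ∑ w, M₁ x w * (∑ w', Y w' w) := by rw [Finset.sum_comm]; simp [Finset.mul_sum]
      _ = ∑ w, M₁ x w := by
          exact Finset.sum_congr rfl fun w _ => by rw [hY.2.2 w, mul_one]
  obtain ⟨c, hc1, hc2⟩ := stmt12_aux X hX hXind
    (fun v => ∑ w, M₁ v w) (fun v => ∑ w, M₂ v w) hrow1 hrow2
  -- column sums
  have hcol1 : ∀ w', ∑ w, Y w' w * (∑ v, M₁ v w) = ∑ v, M₂ v w' := by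
    intro w'
    have h := fun v => congrFun (congrFun h2 v) w'
    simp only [Matrix.mul_apply, Matrix.transpose_apply] at h
    calc ∑ w, Y w' w * (∑ v, M₁ v w) = ∑ w, ∑ v, Y w' w * M₁ v w := by
          simp [Finset.mul_sum]
      _ = ∑ v, ∑ w, M₁ v w * Y w' w := by rw [Finset.sum_comm]; simp [mul_comm]
      _ = ∑ v, ∑ x, X x v * M₂ x w' := Finset.sum_congr rfl fun v _ => h v
      _ = ∑ x, (∑ v, X x v) * M₂ x w' := by rw [Finset.sum_comm]; simp [Finset.sum_mul]
      _ = ∑ v, M₂ v w' := by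
          exact Finset.sum_congr rfl fun x _ => by rw [hX.2.1 x, one_mul]
  have hcol2 : ∀ w, ∑ w', Y w' w * (∑ v, M₂ v w') = ∑ v, M₁ v w := by
    intro w
    have h := fun v => congrFun (congrFun h1 v) w
    simp only [Matrix.mul_apply] at h
    calc ∑ w', Y w' w * (∑ v, M₂ v w') = ∑ w', ∑ v, Y w' w * M₂ v w' := by
          simp [Finset.mul_sum]
      _ = ∑ v, ∑ w', M₂ v w' * Y w' w := by rw [Finset.sum_comm]; simp [mul_comm]
      _ = ∑ v, ∑ x, X v x * M₁ x w := Finset.sum_congr rfl fun v _ => (h v).symm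
      _ = ∑ x, (∑ v, X v x) * M₁ x w := by rw [Finset.sum_comm]; simp [Finset.sum_mul]
      _ = ∑ v, M₁ v w := by
          exact Finset.sum_congr rfl fun x _ => by rw [hX.2.2 x, one_mul]
  obtain ⟨d, hd1, hd2⟩ := stmt12_aux Y hY hYind
    (fun w => ∑ v, M₁ v w) (fun w => ∑ v, M₂ v w) hcol1 hcol2
  exact ⟨c, d, hc1, hc2, hd1, hd2⟩

end
end

section
/- Let σ be a signature, let 𝐃 be a σ-structure, and let ({P_i : i ∈ I}, {Q_j : j ∈ J}) be an equitable partition of 𝐃. Then for all elements d₁, d₂ of D lying in the same class P_i and every rooted ftree (𝐓,t), it holds that Hom(𝐓,t;𝐃,d₁) = Hom(𝐓,t;𝐃,d₂). -/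
attribute [local instance] Classical.propDecidable

set_option maxHeartbeats 1000000

noncomputable section

variable {σ : Type} {ar : σ → ℕ}

/-! ### Auxiliary development for `stmt15` -/

section Stmt15Aux

open SimpleGraph

variable {T : Type} (TT : Struct σ ar T)

/-- One step between elements: they share a constraint different from `c`. -/
def StepR (c : Cons TT) (a a' : T) : Prop :=
  ∃ e : Cons TT, e ≠ c ∧ (∃ i, e.2.1 i = a) ∧ (∃ i, e.2.1 i = a')

/-- `a` is in the component of `b` after removing constraint `c`. -/
def InK (c : Cons TT) (b a : T) : Prop := Relation.ReflTransGen (StepR TT c) b a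

lemma stepR_symm {c : Cons TT} : Symmetric (StepR TT c) :=
  fun _ _ ⟨e, h1, h2, h3⟩ => ⟨e, h1, h3, h2⟩

lemma inK_symm {c : Cons TT} {b a : T} (h : InK TT c b a) : InK TT c a b :=
  by
    induction h with
    | refl => exact Relation.ReflTransGen.refl
    | tail _ hs ih => exact Relation.ReflTransGen.head (stepR_symm TT hs) ih

/-- The component structure of `b` after deleting constraint `c`. -/
def Kstr (c : Cons TT) (b : T) : Struct σ ar {a // InK TT c b a} where
  rel R := {u | ∃ hm : (fun i => (u i).1) ∈ TT.rel R,
    (⟨R, ⟨fun i => (u i).1, hm⟩⟩ : Cons TT) ≠ c}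

def liftCons (c : Cons TT) (b : T) (e : Cons (Kstr TT c b)) : Cons TT :=
  ⟨e.1, ⟨fun i => (e.2.1 i).1, e.2.2.choose⟩⟩

lemma liftCons_ne (c : Cons TT) (b : T) (e : Cons (Kstr TT c b)) :
    liftCons TT c b e ≠ c :=
  e.2.2.choose_spec

lemma liftCons_inj (c : Cons TT) (b : T) :
    Function.Injective (liftCons TT c b) := by
  rintro ⟨R, u, hu⟩ ⟨R', u', hu'⟩ h
  obtain ⟨h1, h2⟩ := Sigma.mk.inj_iff.mp h
  subst h1
  have h3 : (fun i => (u i).1) = fun i => (u' i).1 :=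
    congrArg Subtype.val (eq_of_heq h2)
  have h4 : u = u' := funext fun i => Subtype.ext (congrFun h3 i)
  subst h4
  rfl

lemma factor_adj {A : Type} {AA : Struct σ ar A} {x y : A ⊕ Cons AA} :
    (factorGraph AA).Adj x y ↔ x ≠ y ∧
      ((∃ a cc, x = Sum.inl a ∧ y = Sum.inr cc ∧ ∃ i, cc.2.1 i = a) ∨
       (∃ a cc, y = Sum.inl a ∧ x = Sum.inr cc ∧ ∃ i, cc.2.1 i = a)) :=
  SimpleGraph.fromRel_adj _ _ _

lemma adj_mk {A : Type} {AA : Struct σ ar A} {a : A} {cc : Cons AA}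
    (h : ∃ i, cc.2.1 i = a) :
    (factorGraph AA).Adj (Sum.inl a) (Sum.inr cc) :=
  factor_adj.mpr ⟨by simp, Or.inl ⟨a, cc, rfl, rfl, h⟩⟩

/-- Every constraint of a connected structure with an element has positive arity. -/
lemma cons_pos (htree : IsFtree TT) (t : T) (e : Cons TT) :
    Nonempty (Fin (ar e.1)) := by
  obtain ⟨W⟩ := htree.isConnected.preconnected (Sum.inr e) (Sum.inl t)
  have key : ∀ (x y : T ⊕ Cons TT) (W : (factorGraph TT).Walk x y),
      x = Sum.inr e → x ≠ y → Nonempty (Fin (ar e.1)) := by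
    intro x y W
    cases W with
    | nil => intro _ h; exact absurd rfl h
    | cons h W' =>
      intro hx _
      subst hx
      rcases factor_adj.mp h with ⟨_, h1 | h1⟩
      · obtain ⟨a, cc, hxx, _, _⟩ := h1
        exact absurd hxx (by simp)
      · obtain ⟨a, cc, _, hxx, i, _⟩ := h1
        obtain rfl : e = cc := by injection hxx
        exact ⟨i⟩
  exact key _ _ W rfl (by simp)

/-- Covering: every element is connected (avoiding `c`) to some element of `c`. -/
lemma cover_aux (c : Cons TT) :
    ∀ (x y : T ⊕ Cons TT) (_ : (factorGraph TT).Walk x y), y = Sum.inr c →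
      (∀ a, x = Sum.inl a → ∃ b, (∃ i, c.2.1 i = b) ∧ InK TT c b a) ∧
      (∀ e, x = Sum.inr e → e ≠ c →
        ∃ b a, (∃ i, c.2.1 i = b) ∧ (∃ i, e.2.1 i = a) ∧ InK TT c b a) := by
  intro x y W
  induction W with
  | nil =>
    intro hy
    subst hy
    constructor
    · intro a ha; exact absurd ha (by simp)
    · intro e he hne
      exact absurd (by injection he with h; exact h.symm) hne
  | @cons u v w h W ih =>
    intro hy
    subst hy
    have ih' := ih rfl
    rcases factor_adj.mp h with ⟨_, h1 | h1⟩
    · obtain ⟨a, cc, hx, hv, i, hi⟩ := h1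
      subst hx; subst hv
      constructor
      · rintro a' ha'
        obtain rfl : a = a' := by injection ha'
        by_cases hcc : cc = c
        · subst hcc
          exact ⟨a, ⟨i, hi⟩, Relation.ReflTransGen.refl⟩
        · obtain ⟨b, a2, hb, ⟨i2, hi2⟩, hk⟩ := ih'.2 cc rfl hcc
          exact ⟨b, hb, hk.tail ⟨cc, hcc, ⟨i2, hi2⟩, ⟨i, hi⟩⟩⟩
      · intro e he; exact absurd he (by simp)
    · obtain ⟨a, cc, hv, hx, i, hi⟩ := h1
      subst hx; subst hv
      constructor
      · intro a' ha'; exact absurd ha' (by simp)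
      · rintro e he hne
        obtain rfl : cc = e := by injection he
        obtain ⟨b, hb, hk⟩ := ih'.1 a rfl
        exact ⟨b, a, hb, ⟨i, hi⟩, hk⟩

lemma cover (htree : IsFtree TT) (c : Cons TT) (a : T) :
    ∃ b, (∃ i, c.2.1 i = b) ∧ InK TT c b a := by
  obtain ⟨W⟩ := htree.isConnected.preconnected (Sum.inl a) (Sum.inr c)
  exact (cover_aux TT c _ _ W rfl).1 a rfl

lemma inK_walk (c : Cons TT) {b a : T} (h : InK TT c b a) :
    ∃ W : (factorGraph TT).Walk (Sum.inl b) (Sum.inl a),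
      Sum.inr c ∉ W.support := by
  induction h with
  | refl => exact ⟨SimpleGraph.Walk.nil, by simp⟩
  | @tail a' a hba hstep ih =>
    obtain ⟨W, hW⟩ := ih
    obtain ⟨e, hne, ⟨i1, hi1⟩, ⟨i2, hi2⟩⟩ := hstep
    have adj1 : (factorGraph TT).Adj (Sum.inl a') (Sum.inr e) := adj_mk ⟨i1, hi1⟩
    have adj2 : (factorGraph TT).Adj (Sum.inr e) (Sum.inl a) := (adj_mk ⟨i2, hi2⟩).symm
    refine ⟨W.append (SimpleGraph.Walk.cons adj1 (SimpleGraph.Walk.cons adj2 SimpleGraph.Walk.nil)), ?_⟩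
    intro hmem
    rw [SimpleGraph.Walk.mem_support_append_iff] at hmem
    rcases hmem with hmem | hmem
    · exact hW hmem
    · simp only [SimpleGraph.Walk.support_cons, SimpleGraph.Walk.support_nil,
        List.mem_cons, List.mem_singleton] at hmem
      rcases hmem with h1 | h1 | h1 | h1
      · exact absurd h1 (by simp)
      · exact hne (by injection h1.symm)
      · exact absurd h1 (by simp)
      · exact absurd h1 (by simp [List.mem_nil_iff] )

lemma sep (htree : IsFtree TT) (c : Cons TT) {b b' : T}
    (hb : ∃ i, c.2.1 i = b) (hb' : ∃ i, c.2.1 i = b') (hne : b ≠ b')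
    (h : InK TT c b b') : False := by
  obtain ⟨W, hW⟩ := inK_walk TT c h
  have adj1 : (factorGraph TT).Adj (Sum.inl b) (Sum.inr c) := adj_mk hb
  have adj2 : (factorGraph TT).Adj (Sum.inr c) (Sum.inl b') := (adj_mk hb').symm
  let P1 : (factorGraph TT).Walk (Sum.inl b) (Sum.inl b') :=
    SimpleGraph.Walk.cons adj1 (SimpleGraph.Walk.cons adj2 SimpleGraph.Walk.nil)
  have hP1 : P1.IsPath := by
    rw [SimpleGraph.Walk.cons_isPath_iff]
    refine ⟨?_, ?_⟩
    · rw [SimpleGraph.Walk.cons_isPath_iff]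
      refine ⟨SimpleGraph.Walk.IsPath.nil, by simp⟩
    · simp [hne]
  obtain ⟨_, huniq⟩ := SimpleGraph.isTree_iff_existsUnique_path.mp htree
  have hu := huniq (Sum.inl b) (Sum.inl b')
  have e1 : P1 = W.toPath.val :=
    hu.unique hP1 W.toPath.prop
  have hmem : Sum.inr c ∈ W.toPath.val.support := by
    rw [← e1]
    simp [P1]
  exact hW (SimpleGraph.Walk.support_toPath_subset W hmem)

lemma uniqK (htree : IsFtree TT) (c : Cons TT) {b b' a : T}
    (hb : ∃ i, c.2.1 i = b) (hb' : ∃ i, c.2.1 i = b')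
    (h : InK TT c b a) (h' : InK TT c b' a) : b = b' := by
  by_contra hne
  exact sep TT htree c hb hb' hne (h.trans (inK_symm TT h'))

lemma exists_cons_at (htree : IsFtree TT) (t : T) (hne : Nonempty (Cons TT)) :
    ∃ (c : Cons TT) (s₀ : Fin (ar c.1)), c.2.1 s₀ = t := by
  obtain ⟨e⟩ := hne
  obtain ⟨W⟩ := htree.isConnected.preconnected (Sum.inl t) (Sum.inr e)
  have key : ∀ (x y : T ⊕ Cons TT) (W : (factorGraph TT).Walk x y),
      x = Sum.inl t → x ≠ y → ∃ (c : Cons TT) (s₀ : Fin (ar c.1)), c.2.1 s₀ = t := by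
    intro x y W
    cases W with
    | nil => intro _ h; exact absurd rfl h
    | cons h W' =>
      intro hx _
      subst hx
      rcases factor_adj.mp h with ⟨_, h1 | h1⟩
      · obtain ⟨a, cc, hxx, _, i, hi⟩ := h1
        obtain rfl : t = a := by injection hxx
        exact ⟨cc, i, hi⟩
      · obtain ⟨a, cc, _, hxx, _⟩ := h1
        exact absurd hxx (by simp)
  exact key _ _ W rfl (by simp)



/-- All elements of a surviving constraint lie in the same component. -/
lemma inK_of_cons {c : Cons TT} {b : T} {e : Cons TT} (hne : e ≠ c)
    {i0 : Fin (ar e.1)} (h0 : InK TT c b (e.2.1 i0)) (j : Fin (ar e.1)) :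
    InK TT c b (e.2.1 j) :=
  h0.tail ⟨e, hne, ⟨i0, rfl⟩, ⟨j, rfl⟩⟩

/-- Lifting a surviving constraint with all elements in the component to `Kstr`. -/
def liftUp (c : Cons TT) (b : T) (e : Cons TT) (hne : e ≠ c)
    (hall : ∀ j, InK TT c b (e.2.1 j)) : Cons (Kstr TT c b) :=
  ⟨e.1, ⟨fun j => ⟨e.2.1 j, hall j⟩, ⟨e.2.2, hne⟩⟩⟩

/-- The vertex map from the factor graph of `Kstr` to that of `TT`. -/
def KPhi (c : Cons TT) (b : T) :
    {a // InK TT c b a} ⊕ Cons (Kstr TT c b) → T ⊕ Cons TT :=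
  Sum.map Subtype.val (liftCons TT c b)

lemma KPhi_inj (c : Cons TT) (b : T) : Function.Injective (KPhi TT c b) :=
  Function.Injective.sumMap Subtype.val_injective (liftCons_inj TT c b)

lemma KPhi_hom (c : Cons TT) (b : T) :
    ∀ {x y}, (factorGraph (Kstr TT c b)).Adj x y →
      (factorGraph TT).Adj (KPhi TT c b x) (KPhi TT c b y) := by
  intro x y h
  rcases factor_adj.mp h with ⟨hne, h1 | h1⟩
  · obtain ⟨a, cc, hx, hy, i, hi⟩ := h1
    subst hx; subst hy
    show (factorGraph TT).Adj (Sum.inl a.val) (Sum.inr (liftCons TT c b cc))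
    exact adj_mk ⟨i, congrArg Subtype.val hi⟩
  · obtain ⟨a, cc, hy, hx, i, hi⟩ := h1
    subst hx; subst hy
    show (factorGraph TT).Adj (Sum.inr (liftCons TT c b cc)) (Sum.inl a.val)
    exact (adj_mk (AA := TT) (a := a.val) (cc := liftCons TT c b cc)
      ⟨i, congrArg Subtype.val hi⟩).symm

/-- The component structure is again an ftree. -/
lemma Kstr_ftree (htree : IsFtree TT) (t : T) (c : Cons TT) (b : T) :
    IsFtree (Kstr TT c b) := by
  let f : factorGraph (Kstr TT c b) →g factorGraph TT :=
    ⟨KPhi TT c b, fun h => KPhi_hom TT c b h⟩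
  have hac : (factorGraph (Kstr TT c b)).IsAcyclic := by
    intro v P hP
    exact htree.IsAcyclic (P.map f)
      ((SimpleGraph.Walk.map_isCycle_iff_of_injective (KPhi_inj TT c b)).mpr hP)
  have base : ∀ (a : T) (h : InK TT c b a),
      (factorGraph (Kstr TT c b)).Reachable
        (Sum.inl ⟨b, Relation.ReflTransGen.refl⟩) (Sum.inl ⟨a, h⟩) := by
    intro a h
    induction h with
    | refl => exact SimpleGraph.Reachable.refl _
    | @tail a' a hba' hstep ih =>
      obtain ⟨e, hne, ⟨i1, hi1⟩, ⟨i2, hi2⟩⟩ := hstep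
      have hall : ∀ j, InK TT c b (e.2.1 j) :=
        inK_of_cons TT hne (hi1 ▸ hba' : InK TT c b (e.2.1 i1))
      let ek : Cons (Kstr TT c b) := liftUp TT c b e hne hall
      have adj1 : (factorGraph (Kstr TT c b)).Adj (Sum.inl ⟨a', hba'⟩) (Sum.inr ek) :=
        adj_mk (AA := Kstr TT c b) ⟨i1, Subtype.ext hi1⟩
      have adj2 : (factorGraph (Kstr TT c b)).Adj (Sum.inr ek)
          (Sum.inl ⟨a, hba'.tail ⟨e, hne, ⟨i1, hi1⟩, ⟨i2, hi2⟩⟩⟩) :=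
        (adj_mk (AA := Kstr TT c b) ⟨i2, Subtype.ext hi2⟩).symm
      exact (ih.trans adj1.reachable).trans adj2.reachable
  have conn : (factorGraph (Kstr TT c b)).Connected := by
    rw [SimpleGraph.connected_iff]
    refine ⟨?_, ⟨Sum.inl ⟨b, Relation.ReflTransGen.refl⟩⟩⟩
    have reach : ∀ x, (factorGraph (Kstr TT c b)).Reachable
        (Sum.inl ⟨b, Relation.ReflTransGen.refl⟩) x := by
      intro x
      cases x with
      | inl a => exact base a.1 a.2
      | inr ek =>
        obtain ⟨i⟩ : Nonempty (Fin (ar ek.1)) := cons_pos TT htree t (liftCons TT c b ek)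
        have adj : (factorGraph (Kstr TT c b)).Adj (Sum.inl (ek.2.1 i)) (Sum.inr ek) :=
          adj_mk (AA := Kstr TT c b) ⟨i, rfl⟩
        exact ((base (ek.2.1 i).1 (ek.2.1 i).2).trans adj.reachable)
    exact fun u v => (reach u).symm.trans (reach v)
  exact ⟨conn, hac⟩

lemma isHom_restrict {D : Type} {DD : Struct σ ar D} {h : T → D}
    (hh : IsHom TT DD h) (c : Cons TT) (b : T) :
    IsHom (Kstr TT c b) DD (fun x => h x.1) := by
  intro R u hu
  obtain ⟨hm, _⟩ := hu
  exact hh R _ hm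


/-- The gluing formula: homomorphism counts decompose at a constraint containing `t`. -/
lemma gluing {D : Type} [Fintype D] (DD : Struct σ ar D) [Fintype T]
    (htree : IsFtree TT) (c : Cons TT) (t : T) (ht' : t ∈ tsupp c) (d : D) :
    rhomCount TT t DD d =
      ∑ φ : {y // y ∈ tsupp c} → D,
        if ((fun i => φ ⟨c.2.1 i, mem_tsupp c i⟩) ∈ DD.rel c.1 ∧ φ ⟨t, ht'⟩ = d) then
          ∏ b : {y // y ∈ tsupp c},
            rhomCount (Kstr TT c b.1) ⟨b.1, Relation.ReflTransGen.refl⟩ DD (φ b)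
        else 0 := by
  classical
  have cover' : ∀ a : T, ∃ b : {y // y ∈ tsupp c}, InK TT c b.1 a := by
    intro a
    obtain ⟨b, ⟨i, hi⟩, hk⟩ := cover TT htree c a
    exact ⟨⟨b, Finset.mem_image.mpr ⟨i, Finset.mem_univ i, hi⟩⟩, hk⟩
  choose β hβ using cover'
  have memsupp : ∀ b : {y // y ∈ tsupp c}, ∃ i, c.2.1 i = b.1 := by
    intro b
    obtain ⟨i, _, hi⟩ := Finset.mem_image.mp b.2
    exact ⟨i, hi⟩
  have uniq' : ∀ (a : T) (b : {y // y ∈ tsupp c}), InK TT c b.1 a → β a = b := by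
    intro a b h
    exact Subtype.ext (uniqK TT htree c (memsupp (β a)) (memsupp b) (hβ a) h)
  let Fam : Type := ∀ b : {y // y ∈ tsupp c}, ({a // InK TT c b.1 a} → D)
  let Cond : ({y // y ∈ tsupp c} → D) → Fam → Prop := fun φ ψ =>
    ((fun i => φ ⟨c.2.1 i, mem_tsupp c i⟩) ∈ DD.rel c.1 ∧ φ ⟨t, ht'⟩ = d) ∧
    ∀ b, IsHom (Kstr TT c b.1) DD (ψ b) ∧ ψ b ⟨b.1, Relation.ReflTransGen.refl⟩ = φ b
  have hval : ∀ (ψ : Fam) (b b' : {y // y ∈ tsupp c}) (_ : b = b') (a : T)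
      (h1 : InK TT c b.1 a) (h2 : InK TT c b'.1 a), ψ b ⟨a, h1⟩ = ψ b' ⟨a, h2⟩ := by
    rintro ψ b b' rfl a h1 h2; rfl
  have main : Nat.card {h : T → D // IsHom TT DD h ∧ h t = d}
      = Nat.card (Σ φ : {y // y ∈ tsupp c} → D, {ψ : Fam // Cond φ ψ}) := by
    apply Nat.card_congr
    refine Equiv.mk
      (fun h => ⟨fun y => h.1 y.1, ⟨fun b x => h.1 x.1,
        ⟨⟨h.2.1 c.1 c.2.1 c.2.2, h.2.2⟩,
          fun b => ⟨isHom_restrict TT h.2.1 c b.1, rfl⟩⟩⟩⟩)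
      (fun x => ⟨fun a => x.2.1 (β a) ⟨a, hβ a⟩, ?_, ?_⟩) ?_ ?_
    · -- the glued map is a homomorphism
      intro R u hu
      by_cases hec : (⟨R, ⟨u, hu⟩⟩ : Cons TT) = c
      · subst hec
        have hkey : ∀ i : Fin (ar R),
            x.2.1 (β (u i)) ⟨u i, hβ (u i)⟩
              = x.1 ⟨u i, mem_tsupp (⟨R, ⟨u, hu⟩⟩ : Cons TT) i⟩ := by
          intro i
          have hin : InK TT (⟨R, ⟨u, hu⟩⟩ : Cons TT) (u i) (u i) := Relation.ReflTransGen.refl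
          rw [hval x.2.1 (β (u i)) ⟨u i, mem_tsupp (⟨R, ⟨u, hu⟩⟩ : Cons TT) i⟩
            (uniq' (u i) ⟨u i, mem_tsupp (⟨R, ⟨u, hu⟩⟩ : Cons TT) i⟩ hin) (u i) (hβ (u i)) hin]
          exact (x.2.2.2 ⟨u i, mem_tsupp (⟨R, ⟨u, hu⟩⟩ : Cons TT) i⟩).2
        show (fun i => x.2.1 (β (u i)) ⟨u i, hβ (u i)⟩) ∈ DD.rel R
        have heq2 : (fun i => x.2.1 (β (u i)) ⟨u i, hβ (u i)⟩)
            = fun i => x.1 ⟨u i, mem_tsupp (⟨R, ⟨u, hu⟩⟩ : Cons TT) i⟩ := funext hkey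
        rw [heq2]
        exact x.2.2.1.1
      · obtain ⟨i₀⟩ : Nonempty (Fin (ar R)) := cons_pos TT htree t ⟨R, ⟨u, hu⟩⟩
        have hall : ∀ j, InK TT c (β (u i₀)).1 (u j) := fun j =>
          (hβ (u i₀)).tail ⟨⟨R, ⟨u, hu⟩⟩, hec, ⟨i₀, rfl⟩, ⟨j, rfl⟩⟩
        have hkey : ∀ j : Fin (ar R),
            x.2.1 (β (u j)) ⟨u j, hβ (u j)⟩ = x.2.1 (β (u i₀)) ⟨u j, hall j⟩ := fun j =>
          hval x.2.1 (β (u j)) (β (u i₀)) (uniq' (u j) (β (u i₀)) (hall j)) (u j)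
            (hβ (u j)) (hall j)
        show (fun j => x.2.1 (β (u j)) ⟨u j, hβ (u j)⟩) ∈ DD.rel R
        have heq2 : (fun j => x.2.1 (β (u j)) ⟨u j, hβ (u j)⟩)
            = fun j => x.2.1 (β (u i₀)) ⟨u j, hall j⟩ := funext hkey
        rw [heq2]
        exact (x.2.2.2 (β (u i₀))).1 R
          (liftUp TT c (β (u i₀)).1 ⟨R, ⟨u, hu⟩⟩ hec hall).2.1
          (liftUp TT c (β (u i₀)).1 ⟨R, ⟨u, hu⟩⟩ hec hall).2.2
    · -- the glued map sends t to d
      have hin : InK TT c t t := Relation.ReflTransGen.refl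
      show x.2.1 (β t) ⟨t, hβ t⟩ = d
      rw [hval x.2.1 (β t) ⟨t, ht'⟩ (uniq' t ⟨t, ht'⟩ hin) t (hβ t) hin]
      rw [(x.2.2.2 ⟨t, ht'⟩).2]
      exact x.2.2.1.2
    · -- left inverse
      intro h
      exact Subtype.ext (funext fun a => rfl)
    · -- right inverse
      rintro ⟨φ, ψ, hcond⟩
      have hφ : (fun y : {y // y ∈ tsupp c} =>
          ψ (β y.1) ⟨y.1, hβ y.1⟩) = φ := by
        funext y
        have hin : InK TT c y.1 y.1 := Relation.ReflTransGen.refl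
        rw [hval ψ (β y.1) y (uniq' y.1 y hin) y.1 (hβ y.1) hin]
        exact (hcond.2 y).2
      have hψ : (fun (b : {y // y ∈ tsupp c}) (z : {a // InK TT c b.1 a}) =>
          ψ (β z.1) ⟨z.1, hβ z.1⟩) = ψ := by
        funext b z
        exact hval ψ (β z.1) b (uniq' z.1 b z.2) z.1 (hβ z.1) z.2
      subst hφ
      exact congrArg (Sigma.mk _) (Subtype.ext hψ)
  show Nat.card {h : T → D // IsHom TT DD h ∧ h t = d} = _
  rw [main, Nat.card_eq_fintype_card, Fintype.card_sigma]
  refine Finset.sum_congr rfl (fun φ _ => ?_)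
  rw [← Nat.card_eq_fintype_card]
  by_cases hc0 : ((fun i => φ ⟨c.2.1 i, mem_tsupp c i⟩) ∈ DD.rel c.1 ∧ φ ⟨t, ht'⟩ = d)
  · rw [if_pos hc0]
    have e1 : {ψ : Fam // Cond φ ψ} ≃
        ∀ b : {y // y ∈ tsupp c},
          {g : {a // InK TT c b.1 a} → D //
            IsHom (Kstr TT c b.1) DD g ∧ g ⟨b.1, Relation.ReflTransGen.refl⟩ = φ b} :=
      (Equiv.subtypeEquivRight (fun ψ => and_iff_right hc0)).trans
        (Equiv.subtypePiEquivPi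
          (p := fun (b : {y // y ∈ tsupp c}) (g : {a // InK TT c b.1 a} → D) =>
            IsHom (Kstr TT c b.1) DD g ∧ g ⟨b.1, Relation.ReflTransGen.refl⟩ = φ b))
    rw [Nat.card_congr e1, Nat.card_pi]
    exact Finset.prod_congr rfl (fun b _ => rfl)
  · rw [if_neg hc0]
    rw [Nat.card_eq_zero]
    exact Or.inl ⟨fun ψ => hc0 ψ.2.1⟩



lemma sigma_snd_inj {γ : σ → Type} {R : σ} {x y : γ R}
    (h : (⟨R, x⟩ : Σ R, γ R) = ⟨R, y⟩) : x = y :=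
  eq_of_heq (Sigma.mk.inj_iff.mp h).2

lemma matchElem {D : Type} [Fintype D] {DD : Struct σ ar D} {I J : Type}
    {p : D → I} {q : Cons DD → J} {dpar : Label σ ar → J → I → ℕ}
    (heq2 : ∀ (cc : Cons DD) (ℓ : Label σ ar) (i : I),
      Nat.card {a : D // p a = i ∧ lab DD a cc = ℓ} = dpar ℓ (q cc) i)
    {c' c'' : Cons DD} (hq : q c' = q c'') (a : D) :
    ∃ a'', p a'' = p a ∧ lab DD a'' c'' = lab DD a c' := by
  have h1 := heq2 c' (lab DD a c') (p a)
  have h2 := heq2 c'' (lab DD a c') (p a)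
  rw [hq] at h1
  have hpos : 0 < Nat.card {x : D // p x = p a ∧ lab DD x c' = lab DD a c'} :=
    Nat.card_pos_iff.mpr ⟨⟨⟨a, rfl, rfl⟩⟩, Subtype.finite⟩
  rw [h1, ← h2] at hpos
  obtain ⟨⟨a'', h⟩⟩ := (Nat.card_pos_iff.mp hpos).1
  exact ⟨a'', h⟩

lemma cardPart {X L : Type} [Fintype X] [Fintype L] (P : X → Prop) (f : X → L) :
    Nat.card {x // P x} = ∑ ℓ : L, Nat.card {x // P x ∧ f x = ℓ} := by
  classical
  rw [Nat.card_eq_fintype_card, Fintype.card_subtype,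
    Finset.card_eq_sum_card_fiberwise (f := f) (t := Finset.univ)
      (fun x _ => Finset.mem_univ _)]
  refine Finset.sum_congr rfl (fun ℓ _ => ?_)
  rw [Nat.card_eq_fintype_card, Fintype.card_subtype, Finset.filter_filter]

lemma sumB {X J : Type} [Fintype X] (qf : X → J) (w : X → ℕ)
    (hw : ∀ x y, qf x = qf y → w x = w y) (S S' : X → Prop)
    (hc : ∀ j, Nat.card {x // qf x = j ∧ S x} = Nat.card {x // qf x = j ∧ S' x}) :
    (∑ x, if S x then w x else 0) = ∑ x, if S' x then w x else 0 := by
  classical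
  have key : ∀ (S : X → Prop) (j : J) (x₀ : X), qf x₀ = j →
      (∑ x ∈ Finset.univ.filter (fun x => qf x = j), if S x then w x else 0)
        = Nat.card {x // qf x = j ∧ S x} * w x₀ := by
    intro S j x₀ hx₀
    rw [← Finset.sum_filter]
    rw [Finset.sum_congr rfl (fun x hx => ?_)]
    · rw [Finset.sum_const, smul_eq_mul, Nat.card_eq_fintype_card, Fintype.card_subtype,
        Finset.filter_filter]
    · exact hw x x₀ (by
        simp only [Finset.mem_filter, Finset.mem_univ, true_and] at hx
        rw [hx.1, hx₀])
  rw [← Finset.sum_fiberwise_of_maps_to (t := Finset.univ.image qf)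
    (fun x _ => Finset.mem_image_of_mem qf (Finset.mem_univ x)) (fun x => if S x then w x else 0),
    ← Finset.sum_fiberwise_of_maps_to (t := Finset.univ.image qf)
    (fun x _ => Finset.mem_image_of_mem qf (Finset.mem_univ x)) (fun x => if S' x then w x else 0)]
  refine Finset.sum_congr rfl (fun j hj => ?_)
  obtain ⟨x₀, _, hx₀⟩ := Finset.mem_image.mp hj
  rw [key S j x₀ hx₀, key S' j x₀ hx₀, hc j]


/-- Weight of a constraint of `DD`: contribution of homomorphisms inducing it at `c`. -/
def Wgt {D : Type} [Fintype D] (DD : Struct σ ar D) [Fintype T] (c : Cons TT)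
    (c' : Cons DD) : ℕ :=
  ∑ φ : {y // y ∈ tsupp c} → D,
    if (⟨c.1, fun i => φ ⟨c.2.1 i, mem_tsupp c i⟩⟩ : Σ R : σ, Fin (ar R) → D)
        = ⟨c'.1, c'.2.1⟩ then
      ∏ b : {y // y ∈ tsupp c},
        rhomCount (Kstr TT c b.1) ⟨b.1, Relation.ReflTransGen.refl⟩ DD (φ b)
    else 0

/-- The compatibility predicate on constraints of `DD`. -/
def OkP (c : Cons TT) (s₀ : Fin (ar c.1)) {D : Type} (DD : Struct σ ar D) (e : D)
    (c' : Cons DD) : Prop :=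
  ∃ S : Finset (Fin (ar c.1)), lab DD e c' = ⟨c.1, S⟩ ∧ s₀ ∈ S

lemma stepB {D : Type} [Fintype D] [Fintype σ] (DD : Struct σ ar D) [Fintype T]
    (c : Cons TT) (t : T) (s₀ : Fin (ar c.1)) (hs₀ : c.2.1 s₀ = t)
    (ht' : t ∈ tsupp c) (e : D) :
    (∑ φ : {y // y ∈ tsupp c} → D,
      if ((fun i => φ ⟨c.2.1 i, mem_tsupp c i⟩) ∈ DD.rel c.1 ∧ φ ⟨t, ht'⟩ = e) then
        ∏ b : {y // y ∈ tsupp c},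
          rhomCount (Kstr TT c b.1) ⟨b.1, Relation.ReflTransGen.refl⟩ DD (φ b)
      else 0)
    = ∑ c' : Cons DD, if OkP TT c s₀ DD e c' then Wgt TT DD c c' else 0 := by
  classical
  symm
  have swap1 : ∀ c' : Cons DD, (if OkP TT c s₀ DD e c' then Wgt TT DD c c' else 0)
      = ∑ φ : {y // y ∈ tsupp c} → D,
          if (OkP TT c s₀ DD e c' ∧
              (⟨c.1, fun i => φ ⟨c.2.1 i, mem_tsupp c i⟩⟩ : Σ R : σ, Fin (ar R) → D)
                = ⟨c'.1, c'.2.1⟩) then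
            ∏ b : {y // y ∈ tsupp c},
              rhomCount (Kstr TT c b.1) ⟨b.1, Relation.ReflTransGen.refl⟩ DD (φ b)
          else 0 := by
    intro c'
    by_cases h : OkP TT c s₀ DD e c'
    · rw [if_pos h]
      show Wgt TT DD c c' = _
      rw [Wgt]
      exact Finset.sum_congr rfl (fun φ _ => by rw [if_congr (and_iff_right h).symm rfl rfl])
    · rw [if_neg h]
      symm
      exact Finset.sum_eq_zero (fun φ _ => if_neg (fun hh => h hh.1))
  rw [Finset.sum_congr rfl (fun c' _ => swap1 c'), Finset.sum_comm]
  refine Finset.sum_congr rfl (fun φ _ => ?_)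
  by_cases hm : (fun i => φ ⟨c.2.1 i, mem_tsupp c i⟩) ∈ DD.rel c.1
  · have hiff : ∀ c' : Cons DD,
        (OkP TT c s₀ DD e c' ∧
          (⟨c.1, fun i => φ ⟨c.2.1 i, mem_tsupp c i⟩⟩ : Σ R : σ, Fin (ar R) → D)
            = ⟨c'.1, c'.2.1⟩)
        ↔ (c' = ⟨c.1, ⟨fun i => φ ⟨c.2.1 i, mem_tsupp c i⟩, hm⟩⟩ ∧ φ ⟨t, ht'⟩ = e) := by
      intro c'
      constructor
      · rintro ⟨hok, htup⟩
        obtain ⟨R', u', hu'⟩ := c'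
        obtain ⟨h1, h2⟩ := Sigma.mk.inj_iff.mp htup
        subst h1
        have h3 : (fun i => φ ⟨c.2.1 i, mem_tsupp c i⟩) = u' := eq_of_heq h2
        subst h3
        refine ⟨rfl, ?_⟩
        obtain ⟨S, hS, hs⟩ := hok
        have hSf : Finset.univ.filter (fun i => φ ⟨c.2.1 i, mem_tsupp c i⟩ = e) = S :=
          sigma_snd_inj hS
        rw [← hSf, Finset.mem_filter] at hs
        rw [show (⟨t, ht'⟩ : {y // y ∈ tsupp c}) = ⟨c.2.1 s₀, mem_tsupp c s₀⟩ from
          Subtype.ext hs₀.symm]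
        exact hs.2
      · rintro ⟨rfl, hpin⟩
        refine ⟨⟨Finset.univ.filter (fun i => φ ⟨c.2.1 i, mem_tsupp c i⟩ = e), rfl, ?_⟩, rfl⟩
        rw [Finset.mem_filter]
        refine ⟨Finset.mem_univ _, ?_⟩
        rw [show (⟨c.2.1 s₀, mem_tsupp c s₀⟩ : {y // y ∈ tsupp c}) = ⟨t, ht'⟩ from
          Subtype.ext hs₀]
        exact hpin
    rw [Finset.sum_congr rfl (fun c' _ => by rw [if_congr (hiff c') rfl rfl])]
    by_cases hP : φ ⟨t, ht'⟩ = e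
    · rw [if_pos ⟨hm, hP⟩]
      rw [Finset.sum_congr rfl (fun c' _ => by rw [if_congr (and_iff_left hP) rfl rfl])]
      exact (Finset.sum_eq_single_of_mem _ (Finset.mem_univ _)
        (fun c' _ hne => if_neg hne)).trans (if_pos rfl)
    · rw [if_neg (fun hh => hP hh.2)]
      exact Finset.sum_eq_zero (fun c' _ => if_neg (fun hh => hP hh.2))
  · rw [if_neg (fun hh => hm hh.1)]
    refine Finset.sum_eq_zero (fun c' _ => if_neg ?_)
    rintro ⟨hok, htup⟩
    obtain ⟨R', u', hu'⟩ := c'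
    obtain ⟨h1, h2⟩ := Sigma.mk.inj_iff.mp htup
    subst h1
    have h3 : (fun i => φ ⟨c.2.1 i, mem_tsupp c i⟩) = u' := eq_of_heq h2
    subst h3
    exact hm hu'


lemma Wgt_const [Fintype σ] {D : Type} [Fintype D] (DD : Struct σ ar D) [Fintype T]
    (c : Cons TT) {I J : Type} {p : D → I} {q : Cons DD → J}
    {dpar : Label σ ar → J → I → ℕ}
    (heq2 : ∀ (cc : Cons DD) (ℓ : Label σ ar) (i : I),
      Nat.card {a : D // p a = i ∧ lab DD a cc = ℓ} = dpar ℓ (q cc) i)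
    (hD : Nonempty D)
    (IHK : ∀ (b : T) (e e' : D), p e = p e' →
      rhomCount (Kstr TT c b) ⟨b, Relation.ReflTransGen.refl⟩ DD e
        = rhomCount (Kstr TT c b) ⟨b, Relation.ReflTransGen.refl⟩ DD e')
    (c' c'' : Cons DD) (hq : q c' = q c'') : Wgt TT DD c c' = Wgt TT DD c c'' := by
  classical
  obtain ⟨a₀⟩ := hD
  have hsym : c''.1 = c'.1 := by
    obtain ⟨a'', _, hl⟩ := matchElem heq2 hq a₀
    have h5 := congrArg Sigma.fst hl
    exact h5
  by_cases hR : c'.1 = c.1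
  case neg =>
    have z1 : Wgt TT DD c c' = 0 := by
      rw [Wgt]
      refine Finset.sum_eq_zero (fun φ _ => ?_)
      have hcond : ¬ (⟨c.1, fun i => φ ⟨c.2.1 i, mem_tsupp c i⟩⟩ : Σ R : σ, Fin (ar R) → D)
          = ⟨c'.1, c'.2.1⟩ := by
        intro h
        have h5 := congrArg Sigma.fst h
        exact hR h5.symm
      rw [if_neg hcond]
    have z2 : Wgt TT DD c c'' = 0 := by
      rw [Wgt]
      refine Finset.sum_eq_zero (fun φ _ => ?_)
      have hcond : ¬ (⟨c.1, fun i => φ ⟨c.2.1 i, mem_tsupp c i⟩⟩ : Σ R : σ, Fin (ar R) → D)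
          = ⟨c''.1, c''.2.1⟩ := by
        intro h
        have h5 := congrArg Sigma.fst h
        exact hR (hsym ▸ h5.symm)
      rw [if_neg hcond]
    rw [z1, z2]
  case pos =>
    obtain ⟨R', u', hu'⟩ := c'
    obtain ⟨R'', u'', hu''⟩ := c''
    dsimp at hR hsym
    subst hsym
    subst hR
    have key : ∀ s : Fin (ar c.1), p (u' s) = p (u'' s) ∧
        ∀ s', (u' s = u' s' ↔ u'' s = u'' s') := by
      intro s
      obtain ⟨a'', hpa, hl⟩ := matchElem heq2 hq (u' s)
      have hf : Finset.univ.filter (fun i => u'' i = a'')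
          = Finset.univ.filter (fun i => u' i = u' s) := sigma_snd_inj hl
      have hmem : ∀ s', (u' s' = u' s) ↔ (u'' s' = a'') := by
        intro s'
        constructor
        · intro h
          have h2 : s' ∈ Finset.univ.filter (fun i => u' i = u' s) := by simp [h]
          rw [← hf] at h2
          simpa using h2
        · intro h
          have h2 : s' ∈ Finset.univ.filter (fun i => u'' i = a'') := by simp [h]
          rw [hf] at h2
          simpa using h2
      have ha : u'' s = a'' := (hmem s).mp rfl
      constructor
      · rw [ha]; exact hpa.symm
      · intro s'
        constructor
        · intro h
          rw [← ha] at hmem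
          exact ((hmem s').mp h.symm).symm
        · intro h
          rw [← ha] at hmem
          exact ((hmem s').mpr h.symm).symm
    have pick' : ∀ b : {y // y ∈ tsupp c}, ∃ i, c.2.1 i = b.1 := fun b => by
      obtain ⟨i, _, hi⟩ := Finset.mem_image.mp b.2
      exact ⟨i, hi⟩
    choose pick hpick using pick'
    have bsub : ∀ b : {y // y ∈ tsupp c},
        (⟨c.2.1 (pick b), mem_tsupp c (pick b)⟩ : {y // y ∈ tsupp c}) = b := fun b =>
      Subtype.ext (hpick b)
    have mkiff : ∀ (u : Fin (ar c.1) → D),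
        (∃ φ : {y // y ∈ tsupp c} → D,
          (⟨c.1, fun i => φ ⟨c.2.1 i, mem_tsupp c i⟩⟩ : Σ R : σ, Fin (ar R) → D)
            = ⟨c.1, u⟩)
        ↔ (∀ i j, c.2.1 i = c.2.1 j → u i = u j) := by
      intro u
      constructor
      · rintro ⟨φ, hφ⟩ i j hij
        have h3 : (fun i => φ ⟨c.2.1 i, mem_tsupp c i⟩) = u := sigma_snd_inj hφ
        rw [← congrFun h3 i, ← congrFun h3 j]
        exact congrArg φ (Subtype.ext hij)
      · intro hb
        exact ⟨fun b => u (pick b), congrArg (Sigma.mk c.1)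
          (funext fun i => hb _ _ (hpick ⟨c.2.1 i, mem_tsupp c i⟩))⟩
    by_cases hex : ∃ φ : {y // y ∈ tsupp c} → D,
        (⟨c.1, fun i => φ ⟨c.2.1 i, mem_tsupp c i⟩⟩ : Σ R : σ, Fin (ar R) → D) = ⟨c.1, u'⟩
    · obtain ⟨φ', hφ'⟩ := hex
      have hb' : ∀ i j, c.2.1 i = c.2.1 j → u' i = u' j := (mkiff u').mp ⟨φ', hφ'⟩
      have hb'' : ∀ i j, c.2.1 i = c.2.1 j → u'' i = u'' j := fun i j h =>
        ((key i).2 j).mp (hb' i j h)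
      obtain ⟨φ'', hφ''⟩ := (mkiff u'').mpr hb''
      have uniqφ : ∀ (u : Fin (ar c.1) → D) (φ ψ : {y // y ∈ tsupp c} → D),
          (⟨c.1, fun i => φ ⟨c.2.1 i, mem_tsupp c i⟩⟩ : Σ R : σ, Fin (ar R) → D) = ⟨c.1, u⟩ →
          (⟨c.1, fun i => ψ ⟨c.2.1 i, mem_tsupp c i⟩⟩ : Σ R : σ, Fin (ar R) → D) = ⟨c.1, u⟩ →
          φ = ψ := by
        intro u φ ψ h1 h2
        funext b
        have e1 := congrFun (sigma_snd_inj h1) (pick b)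
        have e2 := congrFun (sigma_snd_inj h2) (pick b)
        rw [bsub b] at e1 e2
        rw [e1, e2]
      have col : ∀ (u : Fin (ar c.1) → D) (hu : u ∈ DD.rel c.1)
          (φ : {y // y ∈ tsupp c} → D)
          (_ : (⟨c.1, fun i => φ ⟨c.2.1 i, mem_tsupp c i⟩⟩ : Σ R : σ, Fin (ar R) → D)
            = ⟨c.1, u⟩),
          Wgt TT DD c ⟨c.1, ⟨u, hu⟩⟩
            = ∏ b : {y // y ∈ tsupp c},
                rhomCount (Kstr TT c b.1) ⟨b.1, Relation.ReflTransGen.refl⟩ DD (φ b) := by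
        intro u hu φ hφ
        unfold Wgt
        rw [Finset.sum_eq_single_of_mem φ (Finset.mem_univ φ)
          (fun ψ _ hne => if_neg (fun h => hne (uniqφ u ψ φ h hφ)))]
        rw [if_pos hφ]
      rw [col u' hu' φ' hφ', col u'' hu'' φ'' hφ'']
      refine Finset.prod_congr rfl (fun b _ => ?_)
      have e1 := congrFun (sigma_snd_inj hφ') (pick b)
      have e2 := congrFun (sigma_snd_inj hφ'') (pick b)
      rw [bsub b] at e1 e2
      rw [e1, e2]
      exact IHK b.1 _ _ (key (pick b)).1
    · have hex'' : ¬ ∃ φ : {y // y ∈ tsupp c} → D,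
          (⟨c.1, fun i => φ ⟨c.2.1 i, mem_tsupp c i⟩⟩ : Σ R : σ, Fin (ar R) → D)
            = ⟨c.1, u''⟩ := by
        rintro ⟨φ, hφ⟩
        exact hex ((mkiff u').mpr (fun i j h =>
          ((key i).2 j).mpr ((mkiff u'').mp ⟨φ, hφ⟩ i j h)))
      have z1 : Wgt TT DD c ⟨c.1, ⟨u', hu'⟩⟩ = 0 :=
        Finset.sum_eq_zero (fun φ _ => if_neg (fun h => hex ⟨φ, h⟩))
      have z2 : Wgt TT DD c ⟨c.1, ⟨u'', hu''⟩⟩ = 0 :=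
        Finset.sum_eq_zero (fun φ _ => if_neg (fun h => hex'' ⟨φ, h⟩))
      rw [z1, z2]

lemma okCard [Fintype σ] {D : Type} [Fintype D] (DD : Struct σ ar D) [Fintype T]
    (c : Cons TT) (s₀ : Fin (ar c.1)) {I J : Type} {p : D → I} {q : Cons DD → J}
    {cpar : Label σ ar → I → J → ℕ}
    (heq1 : ∀ (a : D) (ℓ : Label σ ar) (j : J),
      Nat.card {cc : Cons DD // q cc = j ∧ lab DD a cc = ℓ} = cpar ℓ (p a) j)
    (d d' : D) (hp : p d = p d') (j : J) :
    Nat.card {c' : Cons DD // q c' = j ∧ OkP TT c s₀ DD d c'}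
      = Nat.card {c' : Cons DD // q c' = j ∧ OkP TT c s₀ DD d' c'} := by
  classical
  rw [cardPart (fun c' : Cons DD => q c' = j ∧ OkP TT c s₀ DD d c') (lab DD d),
      cardPart (fun c' : Cons DD => q c' = j ∧ OkP TT c s₀ DD d' c') (lab DD d')]
  refine Finset.sum_congr rfl (fun ℓ _ => ?_)
  by_cases hok : ∃ S : Finset (Fin (ar c.1)), ℓ = ⟨c.1, S⟩ ∧ s₀ ∈ S
  · have e1 : ∀ e : D,
        Nat.card {c' : Cons DD // (q c' = j ∧ OkP TT c s₀ DD e c') ∧ lab DD e c' = ℓ}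
          = Nat.card {c' : Cons DD // q c' = j ∧ lab DD e c' = ℓ} := fun e =>
      Nat.card_congr (Equiv.subtypeEquivRight (fun c' => by
        constructor
        · rintro ⟨⟨h1, _⟩, h3⟩
          exact ⟨h1, h3⟩
        · rintro ⟨h1, h2⟩
          obtain ⟨S, hS, hs⟩ := hok
          exact ⟨⟨h1, ⟨S, by rw [h2, hS], hs⟩⟩, h2⟩))
    rw [e1 d, e1 d', heq1 d ℓ j, heq1 d' ℓ j, hp]
  · have e0 : ∀ e : D,
        Nat.card {c' : Cons DD // (q c' = j ∧ OkP TT c s₀ DD e c') ∧ lab DD e c' = ℓ}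
          = 0 := fun e => by
      rw [Nat.card_eq_zero]
      refine Or.inl ⟨fun x => hok ?_⟩
      obtain ⟨⟨_, S, hS, hs⟩, hlab⟩ := x.2
      rw [hlab] at hS
      exact ⟨S, hS, hs⟩
    rw [e0 d, e0 d']

lemma consEmpty {D : Type} [Fintype D] (DD : Struct σ ar D) [Fintype T]
    (t : T) (hE : IsEmpty (Cons TT)) (d d' : D) :
    rhomCount TT t DD d = rhomCount TT t DD d' := by
  apply Nat.card_congr
  have hhom : ∀ (g : T → D), IsHom TT DD g := fun g R u hu => (hE.false ⟨R, ⟨u, hu⟩⟩).elim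
  refine Equiv.mk
    (fun h => ⟨(Equiv.swap d d') ∘ h.1, hhom _, by simp [Function.comp, h.2.2]⟩)
    (fun h => ⟨(Equiv.swap d d') ∘ h.1, hhom _, by simp [Function.comp, h.2.2]⟩)
    ?_ ?_ <;> intro h <;> exact Subtype.ext (funext fun a => by simp)


lemma master [Fintype σ] {D : Type} [Fintype D] (DD : Struct σ ar D) {I J : Type}
    (p : D → I) (q : Cons DD → J) (cpar : Label σ ar → I → J → ℕ)
    (dpar : Label σ ar → J → I → ℕ) (heq : IsEquitable DD p q cpar dpar) :
    ∀ (n : ℕ) (T : Type) (fT : Fintype T) (TT : Struct σ ar T) (t : T),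
      Nat.card (Cons TT) ≤ n → IsFtree TT →
      ∀ d d' : D, p d = p d' → rhomCount TT t DD d = rhomCount TT t DD d' := by
  intro n
  induction n with
  | zero =>
    intro T fT TT t hcard htree d d' hp
    haveI := fT
    refine consEmpty TT DD t ?_ d d'
    rcases Nat.card_eq_zero.mp (Nat.le_zero.mp hcard) with h | h
    · exact h
    · exact absurd h (not_infinite_iff_finite.mpr inferInstance)
  | succ n IH =>
    intro T fT TT t hcard htree d d' hp
    haveI := fT
    by_cases hne : Nonempty (Cons TT)
    · obtain ⟨c, s₀, hs₀⟩ := exists_cons_at TT htree t hne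
      have ht' : t ∈ tsupp c := Finset.mem_image.mpr ⟨s₀, Finset.mem_univ _, hs₀⟩
      have IHK : ∀ (b : T) (e e' : D), p e = p e' →
          rhomCount (Kstr TT c b) ⟨b, Relation.ReflTransGen.refl⟩ DD e
            = rhomCount (Kstr TT c b) ⟨b, Relation.ReflTransGen.refl⟩ DD e' := by
        intro b
        have hlt : Nat.card (Cons (Kstr TT c b)) < Nat.card (Cons TT) := by
          rw [Nat.card_eq_fintype_card, Nat.card_eq_fintype_card]
          exact Fintype.card_lt_of_injective_of_notMem _ (liftCons_inj TT c b)
            (by rintro ⟨e, he⟩; exact liftCons_ne TT c b e he)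
        exact IH {a // InK TT c b a} inferInstance (Kstr TT c b)
          ⟨b, Relation.ReflTransGen.refl⟩ (by omega) (Kstr_ftree TT htree t c b)
      rw [gluing TT DD htree c t ht' d, gluing TT DD htree c t ht' d']
      rw [stepB TT DD c t s₀ hs₀ ht' d, stepB TT DD c t s₀ hs₀ ht' d']
      exact sumB q (Wgt TT DD c)
        (Wgt_const TT DD c heq.2 ⟨d⟩ IHK)
        (OkP TT c s₀ DD d) (OkP TT c s₀ DD d')
        (okCard TT DD c s₀ heq.1 d d' hp)
    · exact consEmpty TT DD t (not_nonempty_iff.mp hne) d d'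

end Stmt15Aux
theorem stmt15 [Fintype σ] {D : Type} [Fintype D] (DD : Struct σ ar D)
    {I J : Type} (p : D → I) (q : Cons DD → J)
    (cpar : Label σ ar → I → J → ℕ) (dpar : Label σ ar → J → I → ℕ)
    (heq : IsEquitable DD p q cpar dpar)
    (d₁ d₂ : D) (hd : p d₁ = p d₂) :
    ∀ (T : Type) (_ : Fintype T) (TT : Struct σ ar T) (t : T),
      IsFtree TT → rhomCount TT t DD d₁ = rhomCount TT t DD d₂ := by
  intro T fT TT t htree
  haveI := fT
  exact master DD p q cpar dpar heq (Nat.card (Cons TT)) T fT TT t le_rfl htree d₁ d₂ hd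

end
end
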